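/- arXiv:2310.00350 — 3 statements merged into one kernel-verified Lean document; each statement's English description precedes it below -/
import Mathlib

section
/- Fix an integer k ≥ 1 and t ≥ 0. A vertex v belongs to G^(k)_t if and only if the connected component of v in G*_t contains at least k vertices. Moreover, the connected components of G^(k)_t are exactly the connected components of G*_t containing at least k vertices: two vertices of G^(k)_t lie in the same connected component of G^(k)_t if and only if they lie in the same connected component of G*_t. -/
open ENNReal

variable {V : Type*}

/-- The sublevel graph `G*_t`: edges of `G` with weight at most `t`. -/
def sublevel (G : SimpleGraph V) (W : Sym2 V → NNReal) (t : ℝ≥0∞) : SimpleGraph V where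
  Adj u v := G.Adj u v ∧ (W s(u, v) : ℝ≥0∞) ≤ t
  symm := by
    constructor
    intro u v h
    exact ⟨h.1.symm, by rw [Sym2.eq_swap]; exact h.2⟩
  loopless := ⟨fun v h => G.loopless.irrefl v h.1⟩

/-- `N_t(v)`: the number of vertices in the connected component of `v` in `G*_t`. -/
noncomputable def clusterSize (G : SimpleGraph V) (W : Sym2 V → NNReal) (t : ℝ≥0∞) (v : V) : ℕ :=
  Set.ncard {u | (sublevel G W t).Reachable v u}

/-- `τ_k(v) = inf {t : N_t(v) ≥ k}`, the `k`-cluster filtration value of a vertex. -/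
noncomputable def tauV (G : SimpleGraph V) (W : Sym2 V → NNReal) (k : ℕ) (v : V) : ℝ≥0∞ :=
  sInf {t : ℝ≥0∞ | k ≤ clusterSize G W t v}

/-- `τ_k(e) = max (τ_k(u), τ_k(v), W(e))`, the `k`-cluster filtration value of an edge. -/
noncomputable def tauEdge (G : SimpleGraph V) (W : Sym2 V → NNReal) (k : ℕ) : Sym2 V → ℝ≥0∞ :=
  Sym2.lift ⟨fun u v => max (max (tauV G W k u) (tauV G W k v)) (W s(u, v)),
    by intro u v; simp only []; rw [max_comm (tauV G W k u), Sym2.eq_swap]⟩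

/-- The `k`-cluster sublevel graph `G^(k)_t`: its vertices are those `v` with
`τ_k(v) ≤ t` and its edges are those `e` with `τ_k(e) ≤ t`. -/
def kClusterGraph (G : SimpleGraph V) (W : Sym2 V → NNReal) (k : ℕ) (t : ℝ≥0∞) :
    SimpleGraph {v : V // tauV G W k v ≤ t} where
  Adj u v := G.Adj u.1 v.1 ∧ tauEdge G W k s(u.1, v.1) ≤ t
  symm := by
    constructor
    intro u v h
    exact ⟨h.1.symm, by rw [Sym2.eq_swap]; exact h.2⟩
  loopless := ⟨fun v h => G.loopless.irrefl v.1 h.1⟩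


lemma sublevel_mono (G : SimpleGraph V) (W : Sym2 V → NNReal) {s s' : ℝ≥0∞}
    (h : s ≤ s') : sublevel G W s ≤ sublevel G W s' :=
  fun _ _ hadj => ⟨hadj.1, hadj.2.trans h⟩

lemma clusterSize_mono [Fintype V] (G : SimpleGraph V) (W : Sym2 V → NNReal) {s s' : ℝ≥0∞}
    (h : s ≤ s') (v : V) : clusterSize G W s v ≤ clusterSize G W s' v :=
  Set.ncard_le_ncard (fun _ hu => hu.mono (sublevel_mono G W h)) (Set.toFinite _)

lemma clusterSize_eq_of_reachable (G : SimpleGraph V) (W : Sym2 V → NNReal) {s : ℝ≥0∞}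
    {a c : V} (h : (sublevel G W s).Reachable a c) :
    clusterSize G W s a = clusterSize G W s c := by
  unfold clusterSize
  congr 1
  ext u
  exact ⟨fun h' => h.symm.trans h', fun h' => h.trans h'⟩

lemma tauV_le_iff [Fintype V] (G : SimpleGraph V) (W : Sym2 V → NNReal) (k : ℕ)
    (t : NNReal) (v : V) :
    tauV G W k v ≤ (t : ℝ≥0∞) ↔ k ≤ clusterSize G W (t : ℝ≥0∞) v := by
  constructor
  · intro h
    set T : Set ℝ≥0∞ := {x | (t : ℝ≥0∞) < x ∧ ∃ e : Sym2 V, x = W e} with hTdef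
    have hT : (t : ℝ≥0∞) < sInf T := by
      rcases T.eq_empty_or_nonempty with hE | hNe
      · rw [hE]
        simp only [Set.mem_setOf_eq, sInf_empty]
        exact ENNReal.coe_lt_top
      · have hfin : T.Finite :=
          (Set.finite_range (fun e : Sym2 V => ((W e : ℝ≥0∞)))).subset
            (fun x hx => by obtain ⟨e, he⟩ := hx.2; exact ⟨e, he.symm⟩)
        exact (hNe.csInf_mem hfin).1
    have hlt : sInf {s : ℝ≥0∞ | k ≤ clusterSize G W s v} < sInf T := lt_of_le_of_lt h hT
    obtain ⟨s, hs, hslt⟩ := sInf_lt_iff.mp hlt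
    rcases le_or_gt s (t : ℝ≥0∞) with hle | hgt
    · exact le_trans hs (clusterSize_mono G W hle v)
    · have hEq : sublevel G W s = sublevel G W (t : ℝ≥0∞) := by
        ext a b
        constructor
        · rintro ⟨hadj, hw⟩
          refine ⟨hadj, ?_⟩
          by_contra hc
          push_neg at hc
          have hmem : ((W s(a, b) : ℝ≥0∞)) ∈ T := ⟨hc, s(a, b), rfl⟩
          exact absurd ((sInf_le hmem).trans hw) (not_le.mpr hslt)
        · rintro ⟨hadj, hw⟩
          exact ⟨hadj, hw.trans hgt.le⟩
      have : clusterSize G W s v = clusterSize G W (t : ℝ≥0∞) v := by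
        unfold clusterSize
        rw [hEq]
      exact this ▸ hs
  · intro h
    exact sInf_le h

lemma tauEdge_eq (G : SimpleGraph V) (W : Sym2 V → NNReal) (k : ℕ) (u v : V) :
    tauEdge G W k s(u, v) = max (max (tauV G W k u) (tauV G W k v)) (W s(u, v)) := rfl

/-- For `k ≥ 1` and `t ≥ 0`: a vertex `v` belongs to `G^(k)_t` iff
its connected component in `G*_t` has at least `k` vertices; and two vertices of
`G^(k)_t` lie in the same connected component of `G^(k)_t` iff they lie in the same
connected component of `G*_t`. -/
theorem kClusterGraph_components [Fintype V] (G : SimpleGraph V) (W : Sym2 V → NNReal)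
    (k : ℕ) (hk : 1 ≤ k) (t : NNReal) :
    (∀ v : V, tauV G W k v ≤ (t : ℝ≥0∞) ↔ k ≤ clusterSize G W (t : ℝ≥0∞) v) ∧
    (∀ (u v : V) (hu : tauV G W k u ≤ (t : ℝ≥0∞)) (hv : tauV G W k v ≤ (t : ℝ≥0∞)),
      (kClusterGraph G W k (t : ℝ≥0∞)).Reachable ⟨u, hu⟩ ⟨v, hv⟩ ↔
        (sublevel G W (t : ℝ≥0∞)).Reachable u v) := by
  have part1 : ∀ v : V, tauV G W k v ≤ (t : ℝ≥0∞) ↔ k ≤ clusterSize G W (t : ℝ≥0∞) v :=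
    fun v => tauV_le_iff G W k t v
  refine ⟨part1, fun u v hu hv => ?_⟩
  constructor
  · intro hr
    obtain ⟨w⟩ := hr
    suffices h : ∀ (a b : {x : V // tauV G W k x ≤ (t : ℝ≥0∞)})
        (w : (kClusterGraph G W k (t : ℝ≥0∞)).Walk a b),
        (sublevel G W (t : ℝ≥0∞)).Reachable a.1 b.1 from h _ _ w
    intro a b w
    induction w with
    | nil => exact SimpleGraph.Reachable.refl _
    | @cons a c b h p ih =>
      have hadj : (sublevel G W (t : ℝ≥0∞)).Adj a.1 c.1 := by
        refine ⟨h.1, ?_⟩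
        have := h.2
        rw [tauEdge_eq] at this
        exact le_trans (le_max_right _ _) this
      exact hadj.reachable.trans ih
  · intro hr
    obtain ⟨w⟩ := hr
    suffices h : ∀ (a b : V), (sublevel G W (t : ℝ≥0∞)).Walk a b →
        ∀ (ha : tauV G W k a ≤ (t : ℝ≥0∞)) (hb : tauV G W k b ≤ (t : ℝ≥0∞)),
        (kClusterGraph G W k (t : ℝ≥0∞)).Reachable ⟨a, ha⟩ ⟨b, hb⟩ from h u v w hu hv
    intro a b w
    induction w with
    | nil => exact fun ha hb => SimpleGraph.Reachable.refl _
    | @cons a c b h p ih =>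
      intro ha hb
      have hc : tauV G W k c ≤ (t : ℝ≥0∞) := by
        rw [part1] at ha ⊢
        rwa [clusterSize_eq_of_reachable G W (SimpleGraph.Adj.reachable h)] at ha
      have hadj : (kClusterGraph G W k (t : ℝ≥0∞)).Adj ⟨a, ha⟩ ⟨c, hc⟩ :=
        ⟨h.1, by rw [tauEdge_eq]; exact max_le (max_le ha hc) h.2⟩
      exact hadj.reachable.trans (ih hc hb)
end

section
/- Fix an integer k ≥ 1 and let w : ℕ → ℝ with w(n) → ∞ and w(n) = o(log log n). If p = p(n) satisfies n·p(n) = (1/k)(log n + (k−1) log log n) + w(n), then P(N_k > 0) → 0 as n → ∞, where N_k is the number of connected components of G(n,p) with exactly k vertices. -/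
open MeasureTheory Filter ENNReal

/-- The Erdős–Rényi measure `G(n,p)`: the product Bernoulli(`p`) measure, one
independent coordinate for each of the `C(n,2)` possible edges (non-diagonal
unordered pairs) of a graph on `n` labeled vertices. -/
noncomputable def erMeasure (n : ℕ) (p : ℝ) :
    Measure ({e : Sym2 (Fin n) // ¬ e.IsDiag} → Bool) :=
  Measure.pi fun _ => (PMF.bernoulli (min (Real.toNNReal p) 1) (min_le_right _ _)).toMeasure

/-- The random graph associated to an outcome `ω`: the simple graph on `Fin n`
whose edges are those pairs with indicator `true`. -/
def erGraph (n : ℕ) (ω : {e : Sym2 (Fin n) // ¬ e.IsDiag} → Bool) : SimpleGraph (Fin n) :=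
  SimpleGraph.fromEdgeSet {e : Sym2 (Fin n) | ∃ h : ¬ e.IsDiag, ω ⟨e, h⟩ = true}

/-- `N_j(H)`: the number of connected components of `H` with exactly `j` vertices. -/
noncomputable def numCompsEq {V : Type*} (H : SimpleGraph V) (j : ℕ) : ℕ :=
  Set.ncard {c : H.ConnectedComponent | c.supp.ncard = j}

/-- A finite graph is `k`-cluster connected if it has exactly one connected component
with at least `k` vertices. -/
def kClusterConnected {V : Type*} (H : SimpleGraph V) (k : ℕ) : Prop :=
  ∃! c : H.ConnectedComponent, k ≤ c.supp.ncard

set_option maxHeartbeats 1000000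

lemma cyl_meas (n : ℕ) (p : ℝ) (hp0 : 0 ≤ p) (hp1 : p ≤ 1)
    (T F : Finset {e : Sym2 (Fin n) // ¬ e.IsDiag}) (hdisj : Disjoint T F) :
    erMeasure n p {ω | (∀ e ∈ T, ω e = true) ∧ (∀ e ∈ F, ω e = false)} =
      ENNReal.ofReal p ^ T.card * ENNReal.ofReal (1 - p) ^ F.card := by
  classical
  have hq1 : ENNReal.ofReal p ≤ 1 := by simpa using ENNReal.ofReal_le_one.2 hp1
  have hqmin : min (Real.toNNReal p) 1 = Real.toNNReal p := min_eq_left (Real.toNNReal_le_one.2 hp1)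
  set q : ℝ≥0∞ := ENNReal.ofReal p with hq
  have hsub : (1 : ℝ≥0∞) - q = ENNReal.ofReal (1 - p) := by
    rw [ENNReal.ofReal_sub _ hp0, ENNReal.ofReal_one]
  set s : {e : Sym2 (Fin n) // ¬ e.IsDiag} → Set Bool :=
    fun e => if e ∈ T then {true} else if e ∈ F then {false} else Set.univ with hs
  have hset : {ω : {e : Sym2 (Fin n) // ¬ e.IsDiag} → Bool |
      (∀ e ∈ T, ω e = true) ∧ (∀ e ∈ F, ω e = false)} = Set.pi Set.univ s := by
    ext ω
    simp only [Set.mem_setOf_eq, Set.mem_pi, Set.mem_univ, forall_true_left, hs]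
    constructor
    · rintro ⟨h1, h2⟩ e
      by_cases heT : e ∈ T
      · simp [heT, h1 e heT]
      · by_cases heF : e ∈ F
        · simp [heT, heF, h2 e heF]
        · simp [heT, heF]
    · intro h
      refine ⟨fun e he => ?_, fun e he => ?_⟩
      · have := h e; simp [he] at this; exact this
      · have := h e; simp [Finset.disjoint_right.1 hdisj he, he] at this; exact this
  rw [hset]
  unfold erMeasure
  rw [MeasureTheory.Measure.pi_pi]
  have hval : ∀ e, (PMF.bernoulli (min (Real.toNNReal p) 1) (min_le_right _ _)).toMeasure (s e)
      = if e ∈ T then q else if e ∈ F then 1 - q else 1 := by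
    intro e
    by_cases heT : e ∈ T
    · simp only [hs, heT, if_true]
      rw [PMF.toMeasure_apply_singleton _ _ (measurableSet_singleton _)]
      simp [PMF.bernoulli_apply, hqmin, hq, ENNReal.ofReal]
    · by_cases heF : e ∈ F
      · simp only [hs, heT, heF, if_true, if_false]
        rw [PMF.toMeasure_apply_singleton _ _ (measurableSet_singleton _)]
        simp [PMF.bernoulli_apply, hqmin, hq, ENNReal.ofReal]
      · simp only [hs, heT, heF, if_false]
        exact measure_univ
  rw [Finset.prod_congr rfl (fun e _ => hval e)]
  rw [← Finset.prod_subset (Finset.subset_univ (T ∪ F)) (by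
    intro e _ he
    simp only [Finset.mem_union, not_or] at he
    simp [he.1, he.2])]
  rw [Finset.prod_union hdisj]
  rw [Finset.prod_congr rfl (fun e he => by simp [he] : ∀ e ∈ T, _ = q),
    Finset.prod_congr rfl (fun e he => by
      simp [Finset.disjoint_right.1 hdisj he, he] : ∀ e ∈ F, _ = 1 - q)]
  simp [Finset.prod_const, hsub]

noncomputable def intEdges (n : ℕ) (S : Finset (Fin n)) : Finset {e : Sym2 (Fin n) // ¬ e.IsDiag} := by
  classical
  exact Finset.univ.filter (fun e => ∀ a ∈ e.1, a ∈ S)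

noncomputable def crossEdges (n : ℕ) (S : Finset (Fin n)) : Finset {e : Sym2 (Fin n) // ¬ e.IsDiag} := by
  classical
  exact Finset.univ.filter (fun e => (∃ a ∈ e.1, a ∈ S) ∧ (∃ b ∈ e.1, b ∉ S))

-- adjacency in erGraph
lemma erGraph_adj (n : ℕ) (ω : {e : Sym2 (Fin n) // ¬ e.IsDiag} → Bool) (a b : Fin n) :
    (erGraph n ω).Adj a b ↔ (∃ h : ¬ (s(a,b) : Sym2 (Fin n)).IsDiag, ω ⟨s(a,b), h⟩ = true) ∧ a ≠ b := by
  simp [erGraph, SimpleGraph.fromEdgeSet_adj, Set.mem_setOf_eq]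

lemma event_subset (n k : ℕ) (hk : 1 ≤ k) :
    {ω : {e : Sym2 (Fin n) // ¬ e.IsDiag} → Bool | 0 < numCompsEq (erGraph n ω) k} ⊆
      ⋃ S ∈ Finset.powersetCard k (Finset.univ : Finset (Fin n)),
        ⋃ T ∈ Finset.powersetCard (k-1) (intEdges n S),
          {ω | (∀ e ∈ T, ω e = true) ∧ (∀ e ∈ crossEdges n S, ω e = false)} := by
  classical
  intro ω hω
  simp only [Set.mem_setOf_eq, numCompsEq] at hω
  set G := erGraph n ω with hG
  obtain ⟨c, hc⟩ := Set.nonempty_of_ncard_ne_zero hω.ne'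
  simp only [Set.mem_setOf_eq] at hc
  have hfin : c.supp.Finite := Set.toFinite _
  set S : Finset (Fin n) := hfin.toFinset with hSdef
  have hmemS : ∀ a, a ∈ S ↔ a ∈ c.supp := fun a => hfin.mem_toFinset
  have hScard : S.card = k := by
    rw [← hc, Set.ncard_eq_toFinset_card _ hfin]
  -- cross edges are false
  have hcross : ∀ e ∈ crossEdges n S, ω e = false := by
    intro e he
    simp only [crossEdges, Finset.mem_filter] at he
    obtain ⟨-, ⟨a, hae, haS⟩, ⟨b, hbe, hbS⟩⟩ := he
    by_contra h
    have htrue : ω e = true := by simpa using h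
    have hab : a ≠ b := fun h => hbS (h ▸ haS)
    have he1 : e.1 = s(a,b) := (Sym2.mem_and_mem_iff hab).1 ⟨hae, hbe⟩
    have hadj : G.Adj a b := by
      rw [hG, erGraph_adj]
      refine ⟨⟨he1 ▸ e.2, ?_⟩, hab⟩
      have : e = ⟨s(a,b), he1 ▸ e.2⟩ := Subtype.ext he1
      rw [← this]; exact htrue
    have : b ∈ c.supp := by
      rw [SimpleGraph.ConnectedComponent.mem_supp_iff,
        SimpleGraph.ConnectedComponent.connectedComponentMk_eq_of_adj hadj.symm]
      exact (SimpleGraph.ConnectedComponent.mem_supp_iff _ _).1 ((hmemS a).1 haS)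
    exact hbS ((hmemS b).2 this)
  -- internal true edges: at least k-1 of them
  have hSne : S.Nonempty := by rw [← Finset.card_pos, hScard]; omega
  obtain ⟨r, hr⟩ := hSne
  have key : ∀ v ∈ S.erase r, ∃ u, G.Adj v u ∧ u ∈ c.supp ∧ G.dist u r + 1 = G.dist v r := by
    intro v hv
    obtain ⟨hvr, hvS⟩ := Finset.mem_erase.1 hv
    have hreach : G.Reachable v r := by
      have h1 := (SimpleGraph.ConnectedComponent.mem_supp_iff _ _).1 ((hmemS v).1 hvS)
      have h2 := (SimpleGraph.ConnectedComponent.mem_supp_iff _ _).1 ((hmemS r).1 hr)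
      exact SimpleGraph.ConnectedComponent.exact (h1.trans h2.symm)
    have hdpos : G.dist v r ≠ 0 := by
      intro h0
      rcases SimpleGraph.dist_eq_zero_iff_eq_or_not_reachable.1 h0 with h | h
      · exact hvr h
      · exact h hreach
    obtain ⟨wk, hwk⟩ := hreach.exists_walk_length_eq_dist
    cases wk with
    | nil => exact absurd rfl hvr
    | cons hadj q =>
      rename_i u
      refine ⟨u, hadj, ?_, ?_⟩
      · rw [SimpleGraph.ConnectedComponent.mem_supp_iff,
          SimpleGraph.ConnectedComponent.connectedComponentMk_eq_of_adj hadj.symm]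
        exact (SimpleGraph.ConnectedComponent.mem_supp_iff _ _).1 ((hmemS v).1 hvS)
      · have h1 : G.dist u r ≤ q.length := SimpleGraph.dist_le q
        have h2 : q.length + 1 = G.dist v r := by
          simpa [SimpleGraph.Walk.length_cons] using hwk
        obtain ⟨q', hq'⟩ := (q.reachable).exists_walk_length_eq_dist
        have h3 : G.dist v r ≤ G.dist u r + 1 := by
          have := SimpleGraph.dist_le (SimpleGraph.Walk.cons hadj q')
          simpa [SimpleGraph.Walk.length_cons, hq'] using this
        omega
  choose! u hadj hmem hdist using key
  -- build injection into internal true edges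
  set T0 : Finset {e : Sym2 (Fin n) // ¬ e.IsDiag} :=
    (intEdges n S).filter (fun e => ω e = true) with hT0
  have hcardT0 : k - 1 ≤ T0.card := by
    rcases Finset.eq_empty_or_nonempty (S.erase r) with hemp | ⟨v0, hv0⟩
    · have h0 : (S.erase r).card = 0 := by rw [hemp]; rfl
      rw [Finset.card_erase_of_mem hr, hScard] at h0
      omega
    · have hne0 : ¬ (s(v0, u v0) : Sym2 (Fin n)).IsDiag := by
        rw [Sym2.isDiag_iff_proj_eq]
        exact (hadj v0 hv0).ne
      set junk : {e : Sym2 (Fin n) // ¬ e.IsDiag} := ⟨s(v0, u v0), hne0⟩ with hjunk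
      set f : Fin n → {e : Sym2 (Fin n) // ¬ e.IsDiag} :=
        fun v => if h : ¬ (s(v, u v) : Sym2 (Fin n)).IsDiag then ⟨s(v, u v), h⟩ else junk with hf
      have hnd : ∀ v (hv : v ∈ S.erase r), ¬ (s(v, u v) : Sym2 (Fin n)).IsDiag := by
        intro v hv
        rw [Sym2.isDiag_iff_proj_eq]; exact (hadj v hv).ne
      have hfval : ∀ v (hv : v ∈ S.erase r), f v = ⟨s(v, u v), hnd v hv⟩ := by
        intro v hv
        simp only [hf]
        rw [dif_pos (hnd v hv)]
      have hmaps : ∀ v ∈ S.erase r, f v ∈ T0 := by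
        intro v hv
        rw [hfval v hv]
        simp only [hT0, Finset.mem_filter, intEdges, Finset.mem_univ, true_and]
        constructor
        · intro a ha
          rw [Sym2.mem_iff] at ha
          rcases ha with rfl | rfl
          · exact (Finset.mem_erase.1 hv).2
          · exact (hmemS _).2 (hmem v hv)
        · have := hadj v hv
          rw [erGraph_adj] at this
          obtain ⟨⟨h', hω'⟩, -⟩ := this
          convert hω' using 2
      have hinj : Set.InjOn f (S.erase r) := by
        intro v hv v' hv' heq
        rw [hfval v hv, hfval v' hv'] at heq
        have : (s(v, u v) : Sym2 (Fin n)) = s(v', u v') := congrArg Subtype.val heq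
        rw [Sym2.eq_iff] at this
        rcases this with ⟨rfl, -⟩ | ⟨h1, h2⟩
        · rfl
        · exfalso
          have d1 := hdist v hv
          have d2 := hdist v' hv'
          rw [← h1] at d2
          rw [h2] at d1
          omega
      have := Finset.card_le_card_of_injOn f hmaps hinj
      rwa [Finset.card_erase_of_mem hr, hScard] at this
  obtain ⟨T, hTsub, hTcard⟩ := Finset.exists_subset_card_eq hcardT0
  refine Set.mem_iUnion₂.2 ⟨S, ?_, Set.mem_iUnion₂.2 ⟨T, ?_, ?_, hcross⟩⟩
  · exact Finset.mem_powersetCard_univ.2 hScard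
  · rw [Finset.mem_powersetCard]
    exact ⟨hTsub.trans (Finset.filter_subset _ _), hTcard⟩
  · intro e he
    have := hTsub he
    simp only [hT0, Finset.mem_filter] at this
    exact this.2

lemma crossEdges_card (n k : ℕ) (S : Finset (Fin n)) (hS : S.card = k) :
    k * (n - k) ≤ (crossEdges n S).card := by
  classical
  rcases Finset.eq_empty_or_nonempty (S ×ˢ Sᶜ) with hemp | ⟨⟨a0, b0⟩, hab0⟩
  · have h0 : (S ×ˢ Sᶜ).card = 0 := by rw [hemp]; rfl
    rw [Finset.card_product, Finset.card_compl, hS, Fintype.card_fin] at h0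
    omega
  · rw [Finset.mem_product, Finset.mem_compl] at hab0
    have hne0 : ¬ (s(a0, b0) : Sym2 (Fin n)).IsDiag := by
      rw [Sym2.isDiag_iff_proj_eq]
      intro hh; exact hab0.2 (hh ▸ hab0.1)
    set f : Fin n × Fin n → {e : Sym2 (Fin n) // ¬ e.IsDiag} :=
      fun ab => if h : ¬ (s(ab.1, ab.2) : Sym2 (Fin n)).IsDiag then ⟨s(ab.1, ab.2), h⟩
        else ⟨s(a0, b0), hne0⟩ with hf
    have hcard : (S ×ˢ Sᶜ).card = k * (n - k) := by
      rw [Finset.card_product, Finset.card_compl, hS, Fintype.card_fin]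
    rw [← hcard]
    apply Finset.card_le_card_of_injOn f
    · rintro ⟨a, b⟩ hab
      rw [Finset.mem_coe, Finset.mem_product, Finset.mem_compl] at hab
      have hnd : ¬ (s(a, b) : Sym2 (Fin n)).IsDiag := by
        rw [Sym2.isDiag_iff_proj_eq]
        intro hh; exact hab.2 (hh ▸ hab.1)
      have : f (a, b) = ⟨s(a, b), hnd⟩ := by simp only [hf]; rw [dif_pos hnd]
      rw [this]
      simp only [Finset.mem_coe, crossEdges, Finset.mem_filter, Finset.mem_univ, true_and]
      exact ⟨⟨a, Sym2.mem_mk_left a b, hab.1⟩, ⟨b, Sym2.mem_mk_right a b, hab.2⟩⟩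
    · rintro ⟨a, b⟩ hab ⟨a', b'⟩ hab' heq
      simp only [Finset.coe_product, Set.mem_prod, Finset.mem_coe, Finset.mem_compl] at hab hab'
      have hnd : ¬ (s(a, b) : Sym2 (Fin n)).IsDiag := by
        rw [Sym2.isDiag_iff_proj_eq]; intro hh; exact hab.2 (hh ▸ hab.1)
      have hnd' : ¬ (s(a', b') : Sym2 (Fin n)).IsDiag := by
        rw [Sym2.isDiag_iff_proj_eq]; intro hh; exact hab'.2 (hh ▸ hab'.1)
      have h1 : f (a, b) = ⟨s(a, b), hnd⟩ := by simp only [hf]; rw [dif_pos hnd]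
      have h2 : f (a', b') = ⟨s(a', b'), hnd'⟩ := by simp only [hf]; rw [dif_pos hnd']
      rw [h1, h2] at heq
      have : (s(a, b) : Sym2 (Fin n)) = s(a', b') := congrArg Subtype.val heq
      rw [Sym2.eq_iff] at this
      rcases this with ⟨rfl, rfl⟩ | ⟨rfl, rfl⟩
      · rfl
      · exact absurd hab'.1 hab.2

lemma intEdges_card (n : ℕ) (S : Finset (Fin n)) :
    (intEdges n S).card ≤ S.card * S.card := by
  classical
  have : (intEdges n S).card ≤ ((S ×ˢ S).image (fun p : Fin n × Fin n => (s(p.1, p.2) : Sym2 (Fin n)))).card := by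
    apply Finset.card_le_card_of_injOn (fun e => e.1)
    · intro e he
      simp only [Finset.mem_coe, intEdges, Finset.mem_filter, Finset.mem_univ, true_and] at he
      obtain ⟨x, y, hxy⟩ : ∃ x y, e.1 = s(x, y) := by
        induction e.1 using Sym2.ind with
        | _ x y => exact ⟨x, y, rfl⟩
      rw [Finset.mem_coe, Finset.mem_image]
      exact ⟨(x, y), Finset.mem_product.2 ⟨he x (hxy ▸ Sym2.mem_mk_left x y),
        he y (hxy ▸ Sym2.mem_mk_right x y)⟩, hxy.symm⟩
    · intro e _ e' _ h
      exact Subtype.ext h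
  calc (intEdges n S).card ≤ _ := this
    _ ≤ (S ×ˢ S).card := Finset.card_image_le
    _ = S.card * S.card := Finset.card_product S S

lemma measure_bound (n k : ℕ) (hk : 1 ≤ k) (p : ℝ) (hp0 : 0 ≤ p) (hp1 : p ≤ 1) :
    erMeasure n p {ω | 0 < numCompsEq (erGraph n ω) k} ≤
      (n.choose k : ℝ≥0∞) * ((k*k).choose (k-1) : ℝ≥0∞) *
        ENNReal.ofReal p ^ (k-1) * ENNReal.ofReal (1-p) ^ (k*(n-k)) := by
  classical
  refine le_trans (measure_mono (event_subset n k hk)) ?_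
  refine le_trans (measure_biUnion_finset_le _ _) ?_
  have hterm : ∀ S ∈ Finset.powersetCard k (Finset.univ : Finset (Fin n)),
      erMeasure n p (⋃ T ∈ Finset.powersetCard (k-1) (intEdges n S),
        {ω | (∀ e ∈ T, ω e = true) ∧ (∀ e ∈ crossEdges n S, ω e = false)}) ≤
      ((k*k).choose (k-1) : ℝ≥0∞) * ENNReal.ofReal p ^ (k-1) * ENNReal.ofReal (1-p) ^ (k*(n-k)) := by
    intro S hS
    have hScard : S.card = k := (Finset.mem_powersetCard_univ.1 hS)
    refine le_trans (measure_biUnion_finset_le _ _) ?_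
    have hone : ∀ T ∈ Finset.powersetCard (k-1) (intEdges n S),
        erMeasure n p {ω | (∀ e ∈ T, ω e = true) ∧ (∀ e ∈ crossEdges n S, ω e = false)} ≤
        ENNReal.ofReal p ^ (k-1) * ENNReal.ofReal (1-p) ^ (k*(n-k)) := by
      intro T hT
      rw [Finset.mem_powersetCard] at hT
      have hdisj : Disjoint T (crossEdges n S) := by
        rw [Finset.disjoint_left]
        intro e heT heC
        have heI := hT.1 heT
        simp only [intEdges, Finset.mem_filter, Finset.mem_univ, true_and] at heI
        simp only [crossEdges, Finset.mem_filter, Finset.mem_univ, true_and] at heC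
        obtain ⟨-, b, hbe, hbS⟩ := heC
        exact hbS (heI b hbe)
      rw [cyl_meas n p hp0 hp1 T (crossEdges n S) hdisj, hT.2]
      refine mul_le_mul_right ?_ _
      refine pow_le_pow_right_of_le_one' ?_ ?_
      · exact ENNReal.ofReal_le_one.2 (by linarith)
      · rw [← hScard]; exact crossEdges_card n S.card S rfl
    refine le_trans (Finset.sum_le_sum hone) ?_
    rw [Finset.sum_const, Finset.card_powersetCard]
    rw [nsmul_eq_mul, ← mul_assoc]
    gcongr
    · exact le_trans (intEdges_card n S) (by rw [hScard])
  refine le_trans (Finset.sum_le_sum hterm) ?_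
  rw [Finset.sum_const, Finset.card_powersetCard, Finset.card_univ, Fintype.card_fin]
  rw [nsmul_eq_mul, ← mul_assoc, ← mul_assoc]

set_option maxHeartbeats 1000000



lemma per_n_bound (k : ℕ) (hk : 1 ≤ k) (n : ℕ) (pn wn : ℝ)
    (hp0 : 0 ≤ pn) (hp1 : pn ≤ 1)
    (hn : 2*k ≤ n)
    (hL1 : 1 ≤ Real.log n)
    (hlam : (n:ℝ) * pn = (1/(k:ℝ)) * (Real.log n + ((k:ℝ)-1) * Real.log (Real.log n)) + wn)
    (hLL0 : 0 ≤ Real.log (Real.log n))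
    (hwLL : wn ≤ Real.log (Real.log n))
    (hLLL : 2*(k:ℝ) * Real.log (Real.log n) ≤ Real.log n)
    (hLn : 2*(k:ℝ) * Real.log n ≤ n) :
    (n.choose k : ℝ) * (((k*k).choose (k-1)) : ℝ) * pn^(k-1) * (1-pn)^(k*(n-k)) ≤
      (((k*k).choose (k-1)) : ℝ) * Real.exp 1 * (2/(k:ℝ))^(k-1) * Real.exp (-((k:ℝ) * wn)) := by
  have hk0 : (0:ℝ) < k := by exact_mod_cast hk
  have hkn : k ≤ n := by omega
  have hn0 : (0:ℝ) < n := by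
    have : 1 ≤ n := by omega
    exact_mod_cast Nat.lt_of_lt_of_le Nat.zero_lt_one this
  set L := Real.log n with hL
  set LL := Real.log L with hLLdef
  have hL0 : 0 < L := by linarith
  have hknp : (k:ℝ) * ((n:ℝ) * pn) = L + ((k:ℝ)-1)*LL + (k:ℝ)*wn := by
    rw [hlam]; field_simp
  have hknp2 : (k:ℝ) * (n:ℝ) * pn ≤ 2*L := by
    have h1 : ((k:ℝ)-1)*LL + (k:ℝ)*wn ≤ (2*(k:ℝ))*LL := by
      have : (k:ℝ)*wn ≤ (k:ℝ)*LL := by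
        apply mul_le_mul_of_nonneg_left hwLL hk0.le
      nlinarith
    nlinarith [hknp]
  have hple : pn ≤ 2*L/((k:ℝ)*n) := by
    rw [le_div_iff₀ (by positivity)]
    nlinarith
  have hk2p : (k:ℝ)*(k:ℝ)*pn ≤ 1 := by
    have h1 : (k:ℝ)*(k:ℝ)*pn = (k:ℝ) * ((k:ℝ)*(n:ℝ)*pn) / n := by field_simp
    rw [h1, div_le_one hn0]
    calc (k:ℝ) * ((k:ℝ)*(n:ℝ)*pn) ≤ (k:ℝ) * (2*L) := by
          apply mul_le_mul_of_nonneg_left hknp2 hk0.le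
      _ ≤ n := by linarith
  have hMcast : ((k*(n-k) : ℕ) : ℝ) = (k:ℝ)*(n:ℝ) - (k:ℝ)*(k:ℝ) := by
    push_cast [Nat.cast_sub hkn]; ring
  -- step 1: (1-pn)^M ≤ exp stuff
  have hexpL : Real.exp L = n := Real.exp_log hn0
  have hexpLL : Real.exp LL = L := Real.exp_log hL0
  have step1 : (1-pn)^(k*(n-k)) ≤
      Real.exp 1 * (((n:ℝ) * L^(k-1))⁻¹ * Real.exp (-((k:ℝ) * wn))) := by
    have h1 : (1-pn)^(k*(n-k)) ≤ Real.exp (-pn) ^ (k*(n-k)) := by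
      apply pow_le_pow_left₀ (by linarith)
      linarith [Real.add_one_le_exp (-pn)]
    have h2 : Real.exp (-pn) ^ (k*(n-k)) = Real.exp (((k*(n-k):ℕ):ℝ) * (-pn)) := by
      rw [← Real.exp_nat_mul]
    have h3 : ((k*(n-k):ℕ):ℝ) * (-pn) =
        (k:ℝ)*(k:ℝ)*pn - L - ((k:ℝ)-1)*LL - (k:ℝ)*wn := by
      rw [hMcast]; nlinarith [hknp]
    have h4 : Real.exp (((k*(n-k):ℕ):ℝ) * (-pn)) ≤
        Real.exp 1 * (Real.exp (-L) * Real.exp (-(((k:ℝ)-1)*LL)) * Real.exp (-((k:ℝ)*wn))) := by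
      rw [h3, ← Real.exp_add, ← Real.exp_add, ← Real.exp_add]
      apply Real.exp_le_exp.2
      linarith
    have h5 : Real.exp (-L) = (n:ℝ)⁻¹ := by
      rw [Real.exp_neg, hexpL]
    have h6 : Real.exp (-(((k:ℝ)-1)*LL)) = (L^(k-1))⁻¹ := by
      rw [Real.exp_neg]
      congr 1
      have : ((k:ℝ)-1) = ((k-1 : ℕ):ℝ) := by push_cast [Nat.cast_sub hk]; ring
      rw [this, Real.exp_nat_mul, hexpLL]
    calc (1-pn)^(k*(n-k)) ≤ Real.exp (((k*(n-k):ℕ):ℝ) * (-pn)) := by rw [← h2]; exact h1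
      _ ≤ Real.exp 1 * (Real.exp (-L) * Real.exp (-(((k:ℝ)-1)*LL)) * Real.exp (-((k:ℝ)*wn))) := h4
      _ = Real.exp 1 * (((n:ℝ) * L^(k-1))⁻¹ * Real.exp (-((k:ℝ) * wn))) := by
          rw [h5, h6, mul_inv]
  have step3 : (n.choose k : ℝ) ≤ (n:ℝ)^k := by
    exact_mod_cast Nat.choose_le_pow n k
  have step4 : pn^(k-1) ≤ (2*L/((k:ℝ)*n))^(k-1) := pow_le_pow_left₀ hp0 hple _
  -- combine
  have hCk : (0:ℝ) ≤ (((k*k).choose (k-1)) : ℝ) := Nat.cast_nonneg _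
  have main : (n.choose k : ℝ) * (((k*k).choose (k-1)) : ℝ) * pn^(k-1) * (1-pn)^(k*(n-k)) ≤
      ((n:ℝ)^k * (((k*k).choose (k-1)) : ℝ) * (2*L/((k:ℝ)*n))^(k-1)) *
        (Real.exp 1 * (((n:ℝ) * L^(k-1))⁻¹ * Real.exp (-((k:ℝ) * wn)))) := by
    have e1 : (n.choose k : ℝ) * (((k*k).choose (k-1)) : ℝ) * pn^(k-1) ≤
        (n:ℝ)^k * (((k*k).choose (k-1)) : ℝ) * (2*L/((k:ℝ)*n))^(k-1) := by
      apply mul_le_mul (mul_le_mul_of_nonneg_right step3 hCk) step4 (pow_nonneg hp0 _) (by positivity)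
    apply mul_le_mul e1 step1 (pow_nonneg (by linarith) _) (by positivity)
  refine main.trans (le_of_eq ?_)
  have hnk : (n:ℝ)^k = (n:ℝ)^(k-1) * n := by
    rw [← pow_succ]
    congr 1
    omega
  rw [div_pow, mul_pow, mul_pow, hnk, mul_inv, div_pow]
  have hLne : L^(k-1) ≠ 0 := by positivity
  have hnne : (n:ℝ)^(k-1) ≠ 0 := by positivity
  field_simp

/-- For `k ≥ 1` and `w(n) → ∞`, `w(n) = o(log log n)`: if
`n·p(n) = (1/k)(log n + (k−1) log log n) + w(n)` then `P(N_k > 0) → 0`, where `N_k`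
is the number of connected components of `G(n,p)` with exactly `k` vertices. -/
theorem prob_comps_size_k_tendsto_zero (k : ℕ) (hk : 1 ≤ k) (p w : ℕ → ℝ)
    (hp0 : ∀ n, 0 ≤ p n) (hp1 : ∀ n, p n ≤ 1)
    (hw : Tendsto w atTop atTop)
    (hwo : w =o[atTop] fun n : ℕ => Real.log (Real.log n))
    (hΛ : ∀ᶠ n : ℕ in atTop, (n : ℝ) * p n =
      (1 / (k : ℝ)) * (Real.log n + ((k : ℝ) - 1) * Real.log (Real.log n)) + w n) :
    Tendsto (fun n => erMeasure n (p n) {ω | 0 < numCompsEq (erGraph n ω) k})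
      atTop (nhds 0) := by
  have hk0 : (0:ℝ) < k := by exact_mod_cast hk
  set Ck : ℝ := (((k*k).choose (k-1)) : ℝ) with hCk
  set fR : ℕ → ℝ := fun n =>
    (n.choose k : ℝ) * Ck * (p n)^(k-1) * (1 - p n)^(k*(n-k)) with hfR
  -- eventual facts
  have hcast : Tendsto (fun n : ℕ => (n:ℝ)) atTop atTop := tendsto_natCast_atTop_atTop
  have hLtend : Tendsto (fun n : ℕ => Real.log n) atTop atTop :=
    Real.tendsto_log_atTop.comp hcast
  have hLLtend : Tendsto (fun n : ℕ => Real.log (Real.log n)) atTop atTop :=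
    Real.tendsto_log_atTop.comp hLtend
  have hL1ev : ∀ᶠ n : ℕ in atTop, 1 ≤ Real.log n := hLtend.eventually_ge_atTop 1
  have hLL0ev : ∀ᶠ n : ℕ in atTop, 0 ≤ Real.log (Real.log n) := hLLtend.eventually_ge_atTop 0
  have hwLLev : ∀ᶠ n : ℕ in atTop, w n ≤ Real.log (Real.log n) := by
    have hb := Asymptotics.isLittleO_iff.mp hwo one_pos
    filter_upwards [hb, hLL0ev] with n h1 h2
    rw [Real.norm_eq_abs, Real.norm_eq_abs, one_mul] at h1
    calc w n ≤ |w n| := le_abs_self _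
      _ ≤ |Real.log (Real.log n)| := h1
      _ = Real.log (Real.log n) := abs_of_nonneg h2
  have hLLo : (fun n : ℕ => Real.log (Real.log n)) =o[atTop] (fun n : ℕ => Real.log n) := by
    exact Real.isLittleO_log_id_atTop.comp_tendsto hLtend
  have hLo : (fun n : ℕ => Real.log n) =o[atTop] (fun n : ℕ => (n:ℝ)) := by
    exact Real.isLittleO_log_id_atTop.comp_tendsto hcast
  have hc2k : (0:ℝ) < 1/(2*k) := by positivity
  have hLLLev : ∀ᶠ n : ℕ in atTop, 2*(k:ℝ) * Real.log (Real.log n) ≤ Real.log n := by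
    have hb := Asymptotics.isLittleO_iff.mp hLLo hc2k
    filter_upwards [hb, hLL0ev, hL1ev] with n h1 h2 h3
    rw [Real.norm_eq_abs, Real.norm_eq_abs, abs_of_nonneg h2,
      abs_of_nonneg (by linarith : (0:ℝ) ≤ Real.log n)] at h1
    have h4 : (2*(k:ℝ)) * (1/(2*(k:ℝ))) = 1 := by field_simp
    nlinarith
  have hLnev : ∀ᶠ n : ℕ in atTop, 2*(k:ℝ) * Real.log n ≤ n := by
    have hb := Asymptotics.isLittleO_iff.mp hLo hc2k
    filter_upwards [hb, hL1ev, hcast.eventually_ge_atTop 0] with n h1 h3 h5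
    rw [Real.norm_eq_abs, Real.norm_eq_abs, abs_of_nonneg (by linarith : (0:ℝ) ≤ Real.log n),
      abs_of_nonneg h5] at h1
    have h4 : (2*(k:ℝ)) * (1/(2*(k:ℝ))) = 1 := by field_simp
    nlinarith
  -- the dominating sequence
  set D : ℝ := Ck * Real.exp 1 * (2/(k:ℝ))^(k-1) with hD
  have hgt : Tendsto (fun n => D * Real.exp (-((k:ℝ) * w n))) atTop (nhds 0) := by
    have h1 : Tendsto (fun n => (k:ℝ) * w n) atTop atTop :=
      hw.const_mul_atTop hk0
    have h2 : Tendsto (fun n => -((k:ℝ) * w n)) atTop atBot :=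
      tendsto_neg_atTop_atBot.comp h1
    have h3 : Tendsto (fun n => Real.exp (-((k:ℝ) * w n))) atTop (nhds 0) :=
      Real.tendsto_exp_atBot.comp h2
    simpa using h3.const_mul D
  have hfR0 : ∀ n, 0 ≤ fR n := by
    intro n
    have := hp0 n; have := hp1 n
    apply mul_nonneg
    apply mul_nonneg
    apply mul_nonneg (Nat.cast_nonneg _) (Nat.cast_nonneg _)
    · exact pow_nonneg (hp0 n) _
    · exact pow_nonneg (by linarith [hp1 n]) _
  have hfRle : ∀ᶠ n : ℕ in atTop, fR n ≤ D * Real.exp (-((k:ℝ) * w n)) := by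
    filter_upwards [hΛ, eventually_ge_atTop (2*k), hL1ev, hLL0ev, hwLLev, hLLLev, hLnev]
      with n h1 h2 h3 h4 h5 h6 h7
    exact per_n_bound k hk n (p n) (w n) (hp0 n) (hp1 n) h2 h3 h1 h4 h5 h6 h7
  have hfRtend : Tendsto fR atTop (nhds 0) :=
    squeeze_zero' (Eventually.of_forall hfR0) hfRle hgt
  -- conversion to ENNReal
  have hconv : ∀ n : ℕ, (n.choose k : ℝ≥0∞) * ((k*k).choose (k-1) : ℝ≥0∞) *
      ENNReal.ofReal (p n) ^ (k-1) * ENNReal.ofReal (1 - p n) ^ (k*(n-k)) =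
      ENNReal.ofReal (fR n) := by
    intro n
    rw [hfR]
    rw [ENNReal.ofReal_mul (mul_nonneg (mul_nonneg (Nat.cast_nonneg _) (Nat.cast_nonneg _))
        (pow_nonneg (hp0 n) _)),
      ENNReal.ofReal_mul (mul_nonneg (Nat.cast_nonneg _) (Nat.cast_nonneg _)),
      ENNReal.ofReal_mul (Nat.cast_nonneg _),
      ENNReal.ofReal_pow (hp0 n), ENNReal.ofReal_pow (by linarith [hp1 n]),
      ENNReal.ofReal_natCast, ENNReal.ofReal_natCast]
  have hle : ∀ n : ℕ, erMeasure n (p n) {ω | 0 < numCompsEq (erGraph n ω) k} ≤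
      ENNReal.ofReal (fR n) := by
    intro n
    exact (measure_bound n k hk (p n) (hp0 n) (hp1 n)).trans_eq (hconv n)
  have htop : Tendsto (fun n => ENNReal.ofReal (fR n)) atTop (nhds 0) := by
    simpa using ENNReal.tendsto_ofReal hfRtend
  exact tendsto_of_tendsto_of_tendsto_of_le_of_le tendsto_const_nhds htop
    (fun n => zero_le) hle
end

section
/- Fix an integer k ≥ 1 and let w : ℕ → ℝ with w(n) → ∞ and w(n) = o(log log n). If p = p(n) satisfies n·p(n) = (1/k)(log n + (k−1) log log n) − w(n), then P(N_k > 0) → 1 as n → ∞, where N_k is the number of connected components of G(n,p) with exactly k vertices. -/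
open MeasureTheory Filter ENNReal

namespace ER

open Finset
open scoped Classical

variable {n k : ℕ}

abbrev EI (n : ℕ) := {e : Sym2 (Fin n) // ¬ e.IsDiag}
abbrev Om (n : ℕ) := EI n → Bool

/-- the canonical path edges on a `k`-set `S`. -/
noncomputable def pe (S : Finset (Fin n)) (hS : S.card = k) : Finset (EI n) :=
  (Finset.range (k-1)).attach.image fun j =>
    ⟨s(S.orderEmbOfFin hS ⟨j.1, by have := Finset.mem_range.mp j.2; omega⟩,
       S.orderEmbOfFin hS ⟨j.1+1, by have := Finset.mem_range.mp j.2; omega⟩), by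
      rw [Sym2.isDiag_iff_proj_eq]
      intro h
      exact absurd ((S.orderEmbOfFin hS).injective h) (by simp [Fin.ext_iff])⟩

def touches (S : Finset (Fin n)) (e : EI n) : Prop := ∃ v ∈ S, v ∈ e.1

/-- bad edges : edges touching S that are not path edges. -/
noncomputable def be (S : Finset (Fin n)) (hS : S.card = k) : Finset (EI n) :=
  Finset.univ.filter (fun e => touches S e ∧ e ∉ pe S hS)

/-- the good event for `S`. -/
def Ev (S : Finset (Fin n)) (hS : S.card = k) : Set (Om n) :=
  {ω | (∀ e ∈ pe S hS, ω e = true) ∧ (∀ e ∈ be S hS, ω e = false)}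

lemma mem_of_mem_pe {S : Finset (Fin n)} {hS : S.card = k} {e : EI n}
    (he : e ∈ pe S hS) {v : Fin n} (hv : v ∈ e.1) : v ∈ S := by
  simp only [pe, mem_image, mem_attach, true_and, Subtype.exists] at he
  obtain ⟨j, hj, rfl⟩ := he
  simp only [Sym2.mem_iff] at hv
  rcases hv with rfl | rfl <;> exact Finset.orderEmbOfFin_mem S hS _

lemma pe_disjoint_be {S : Finset (Fin n)} (hS : S.card = k) :
    Disjoint (pe S hS) (be S hS) := by
  rw [Finset.disjoint_left]
  intro e he hbe
  simp only [be, mem_filter] at hbe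
  exact hbe.2.2 he

lemma adj_mem_of_mem {ω : Om n} {S : Finset (Fin n)} {hS : S.card = k}
    (hω : ω ∈ Ev S hS) {a b : Fin n} (hab : (erGraph n ω).Adj a b) (ha : a ∈ S) : b ∈ S := by
  by_contra hb
  rw [erGraph, SimpleGraph.fromEdgeSet_adj] at hab
  obtain ⟨⟨hd, htr⟩, hne⟩ := hab
  have hepe : (⟨s(a,b), hd⟩ : EI n) ∉ pe S hS := fun h => hb (mem_of_mem_pe h (by simp))
  have hebe : (⟨s(a,b), hd⟩ : EI n) ∈ be S hS := by
    simp only [be, mem_filter, mem_univ, true_and]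
    exact ⟨⟨a, ha, by simp⟩, hepe⟩
  rw [hω.2 _ hebe] at htr
  simp at htr

lemma reach_mem {ω : Om n} {S : Finset (Fin n)} {hS : S.card = k}
    (hω : ω ∈ Ev S hS) {a b : Fin n} (h : (erGraph n ω).Reachable a b) (ha : a ∈ S) :
    b ∈ S := by
  obtain ⟨w⟩ := h
  induction w with
  | nil => exact ha
  | cons h q ih => exact ih (adj_mem_of_mem hω h ha)

lemma reach_of_mem (hk : 1 ≤ k) {ω : Om n} {S : Finset (Fin n)} {hS : S.card = k}
    (hω : ω ∈ Ev S hS) {a b : Fin n} (ha : a ∈ S) (hb : b ∈ S) :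
    (erGraph n ω).Reachable a b := by
  have hadj : ∀ m (hm : m < k - 1),
      (erGraph n ω).Adj (S.orderEmbOfFin hS ⟨m, by omega⟩) (S.orderEmbOfFin hS ⟨m+1, by omega⟩) := by
    intro m hm
    have hmem : (⟨s(S.orderEmbOfFin hS ⟨m, by omega⟩, S.orderEmbOfFin hS ⟨m+1, by omega⟩), by
        rw [Sym2.isDiag_iff_proj_eq]
        intro h
        exact absurd ((S.orderEmbOfFin hS).injective h) (by simp [Fin.ext_iff])⟩ : EI n)
        ∈ pe S hS := by
      simp only [pe, mem_image]
      exact ⟨⟨m, by simp [hm]⟩, mem_attach _ _, rfl⟩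
    have := hω.1 _ hmem
    rw [erGraph, SimpleGraph.fromEdgeSet_adj]
    refine ⟨⟨_, this⟩, ?_⟩
    intro h
    exact absurd ((S.orderEmbOfFin hS).injective h) (by simp [Fin.ext_iff])
  have key : ∀ m (hm : m < k),
      (erGraph n ω).Reachable (S.orderEmbOfFin hS ⟨0, by omega⟩) (S.orderEmbOfFin hS ⟨m, hm⟩) := by
    intro m
    induction m with
    | zero => intro hm; rfl
    | succ m ih =>
      intro hm
      exact (ih (by omega)).trans (hadj m (by omega)).reachable
  obtain ⟨i, rfl⟩ : ∃ i : Fin k, S.orderEmbOfFin hS i = a := by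
    refine ⟨(S.orderIsoOfFin hS).symm ⟨a, ha⟩, ?_⟩
    rw [← Finset.coe_orderIsoOfFin_apply]
    simp
  obtain ⟨j, rfl⟩ : ∃ j : Fin k, S.orderEmbOfFin hS j = b := by
    refine ⟨(S.orderIsoOfFin hS).symm ⟨b, hb⟩, ?_⟩
    rw [← Finset.coe_orderIsoOfFin_apply]
    simp
  exact (key i.1 i.2).symm.trans (by convert key j.1 j.2)

lemma supp_eq (hk : 1 ≤ k) {ω : Om n} {S : Finset (Fin n)} {hS : S.card = k}
    (hω : ω ∈ Ev S hS) {v : Fin n} (hv : v ∈ S) :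
    ((erGraph n ω).connectedComponentMk v).supp = ↑S := by
  ext u
  rw [SimpleGraph.ConnectedComponent.mem_supp_iff, SimpleGraph.ConnectedComponent.eq]
  constructor
  · intro h
    exact reach_mem hω h.symm hv
  · intro h
    exact (reach_of_mem hk hω hv (by exact h)).symm

lemma numCompsEq_pos (hk : 1 ≤ k) {ω : Om n} {S : Finset (Fin n)} {hS : S.card = k}
    (hω : ω ∈ Ev S hS) : 0 < numCompsEq (erGraph n ω) k := by
  obtain ⟨v, hv⟩ : S.Nonempty := Finset.card_pos.mp (by omega)
  rw [numCompsEq, Set.ncard_pos (Set.toFinite _)]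
  exact ⟨(erGraph n ω).connectedComponentMk v, by
    simp only [Set.mem_setOf_eq, supp_eq hk hω hv, Set.ncard_coe_finset, hS]⟩

lemma Ev_disjoint (hk : 1 ≤ k) {S T : Finset (Fin n)} {hS : S.card = k} {hT : T.card = k}
    (hST : S ≠ T) (hint : ¬ Disjoint S T) : Ev S hS ∩ Ev T hT = ∅ := by
  rw [Set.eq_empty_iff_forall_notMem]
  rintro ω ⟨h1, h2⟩
  obtain ⟨v, hvS, hvT⟩ := Finset.not_disjoint_iff.mp hint
  apply hST
  have := (supp_eq hk h1 hvS).symm.trans (supp_eq hk h2 hvT)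
  exact_mod_cast Finset.coe_injective this

end ER

namespace ER2
open ER Finset
open scoped Classical

variable {n k : ℕ}

lemma measurableSet_all (s : Set (Om n)) : MeasurableSet s := by
  have h1 : ∀ x : Om n, MeasurableSet ({x} : Set (Om n)) := by
    intro x
    have : ({x} : Set (Om n)) = Set.pi Set.univ (fun i => {x i}) := by
      ext y
      simp [funext_iff, Set.mem_pi, eq_comm]
  
    rw [this]
    exact MeasurableSet.pi Set.countable_univ
      (fun i _ => (Set.to_countable _).measurableSet)
  have : s = ⋃ x ∈ s, {x} := by simp
  rw [this]
  exact MeasurableSet.biUnion (Set.to_countable _) (fun x _ => h1 x)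

lemma erMeasure_cylinder (p : ℝ) (hp0 : 0 ≤ p) (hp1 : p ≤ 1)
    (P F : Finset (EI n)) (hPF : Disjoint P F) :
    erMeasure n p {ω | (∀ e ∈ P, ω e = true) ∧ (∀ e ∈ F, ω e = false)}
      = ENNReal.ofReal p ^ P.card * ENNReal.ofReal (1 - p) ^ F.card := by
  have hmin : min (Real.toNNReal p) 1 = Real.toNNReal p :=
    min_eq_left (Real.toNNReal_le_one.mpr hp1)
  set ν := (PMF.bernoulli (min (Real.toNNReal p) 1) (min_le_right _ _)).toMeasure with hν
  have hT : ν {true} = ENNReal.ofReal p := by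
    rw [hν, PMF.toMeasure_apply_singleton _ _ (Set.to_countable _).measurableSet]
    simp [PMF.bernoulli_apply, hmin]
    rfl
  have hF : ν {false} = ENNReal.ofReal (1 - p) := by
    rw [hν, PMF.toMeasure_apply_singleton _ _ (Set.to_countable _).measurableSet]
    simp only [PMF.bernoulli_apply, hmin, cond]
    rw [ENNReal.coe_sub, ENNReal.coe_one, ENNReal.ofReal_sub _ hp0, ENNReal.ofReal_one]
    rfl
  have hU : ν Set.univ = 1 := measure_univ
  have hset : {ω : Om n | (∀ e ∈ P, ω e = true) ∧ (∀ e ∈ F, ω e = false)}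
      = Set.pi Set.univ (fun e => if e ∈ P then {true} else if e ∈ F then {false} else Set.univ) := by
    ext ω
    simp only [Set.mem_setOf_eq, Set.mem_pi, Set.mem_univ, true_implies]
    constructor
    · rintro ⟨h1, h2⟩ e
      by_cases heP : e ∈ P
      · simp [heP, h1 e heP]
      · by_cases heF : e ∈ F
        · simp [heP, heF, h2 e heF]
        · simp [heP, heF]
    · intro h
      constructor
      · intro e he
        have := h e
        simp [he] at this
        exact this
      · intro e he
        have := h e
        have heP : e ∉ P := fun h' => (Finset.disjoint_left.mp hPF h') he
        simp [he, heP] at this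
        exact this
  rw [hset, erMeasure, Measure.pi_pi]
  have : ∀ e : EI n, ν (if e ∈ P then {true} else if e ∈ F then {false} else Set.univ)
      = if e ∈ P then ENNReal.ofReal p else if e ∈ F then ENNReal.ofReal (1 - p) else 1 := by
    intro e
    by_cases heP : e ∈ P
    · rw [if_pos heP, if_pos heP]; exact hT
    · by_cases heF : e ∈ F
      · rw [if_neg heP, if_pos heF, if_neg heP, if_pos heF]; exact hF
      · rw [if_neg heP, if_neg heF, if_neg heP, if_neg heF]; exact hU
  rw [Finset.prod_congr rfl (fun e _ => this e)]
  rw [← Finset.prod_mul_prod_compl (P ∪ F)]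
  have hc : ∏ e ∈ (P ∪ F)ᶜ, (if e ∈ P then ENNReal.ofReal p
      else if e ∈ F then ENNReal.ofReal (1 - p) else 1) = 1 := by
    apply Finset.prod_eq_one
    intro e he
    rw [Finset.mem_compl, Finset.mem_union] at he
    push_neg at he
    rw [if_neg he.1, if_neg he.2]
  rw [hc, mul_one, Finset.prod_union hPF]
  congr 1
  · rw [Finset.prod_congr rfl (fun e he => if_pos he), Finset.prod_const]
  · rw [Finset.prod_congr rfl (fun e he => ?_), Finset.prod_const]
    rw [if_neg (fun h' => (Finset.disjoint_left.mp hPF h') he), if_pos he]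

end ER2

namespace ER3
open ER ER2 Finset
open scoped Classical

variable {n k : ℕ}

lemma mk_inf_sup (z : Sym2 (Fin n)) : s(z.inf, z.sup) = z := by
  induction z using Sym2.ind with
  | _ a b =>
    rcases le_total a b with h | h
    · rw [Sym2.inf_mk, Sym2.sup_mk, inf_eq_left.2 h, sup_eq_right.2 h]
    · rw [Sym2.inf_mk, Sym2.sup_mk, inf_eq_right.2 h, sup_eq_left.2 h, Sym2.eq_swap]

lemma mem_iff_inf_sup {z : Sym2 (Fin n)} {v : Fin n} : v ∈ z ↔ v = z.inf ∨ v = z.sup := by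
  conv_lhs => rw [← mk_inf_sup z]
  exact Sym2.mem_iff

/-- canonical endpoints map. -/
noncomputable def ep (S : Finset (Fin n)) (e : EI n) : Fin n × Fin n :=
  if e.1.inf ∈ S then (e.1.inf, e.1.sup) else (e.1.sup, e.1.inf)

lemma ep_recover (S : Finset (Fin n)) (e : EI n) : s((ep S e).1, (ep S e).2) = e.1 := by
  rw [ep]
  split
  · exact mk_inf_sup e.1
  · rw [Sym2.eq_swap]; exact mk_inf_sup e.1

lemma ep_injOn (S : Finset (Fin n)) {A : Finset (EI n)} : Set.InjOn (ep S) A := by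
  intro e _ e' _ h
  apply Subtype.ext
  rw [← ep_recover S e, ← ep_recover S e', h]

lemma card_pe (hk : 1 ≤ k) (S : Finset (Fin n)) (hS : S.card = k) :
    (pe S hS).card = k - 1 := by
  rw [pe, Finset.card_image_of_injOn, Finset.card_attach, Finset.card_range]
  intro j _ j' _ h
  rw [Subtype.mk.injEq, Sym2.eq_iff] at h
  apply Subtype.ext
  have hinj := (S.orderEmbOfFin hS).injective
  rcases h with ⟨h1, _⟩ | ⟨h1, h2⟩
  · have := hinj h1
    rw [Fin.mk.injEq] at this
    exact this
  · have e1 := hinj h1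
    have e2 := hinj h2
    rw [Fin.mk.injEq] at e1 e2
    omega

lemma card_be_le (S : Finset (Fin n)) (hS : S.card = k) : (be S hS).card ≤ k * n := by
  have h : (be S hS).card ≤ (S ×ˢ (univ : Finset (Fin n))).card := by
    apply Finset.card_le_card_of_injOn (ep S) ?_ (ep_injOn S)
    intro e he
    rw [Finset.mem_coe, Finset.mem_product]
    simp only [be, mem_coe, mem_filter] at he
    obtain ⟨_, ⟨v, hvS, hve⟩, _⟩ := he
    rw [mem_iff_inf_sup] at hve
    constructor
    · rw [ep]
      split
      · assumption
      · rcases hve with rfl | rfl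
        · exact absurd hvS (by assumption)
        · exact hvS
    · exact Finset.mem_univ _
  calc (be S hS).card ≤ (S ×ˢ (univ : Finset (Fin n))).card := h
    _ = k * n := by rw [Finset.card_product, hS, Finset.card_univ, Fintype.card_fin]

lemma card_be_inter_le {S T : Finset (Fin n)} (hST : Disjoint S T)
    (hS : S.card = k) (hT : T.card = k) :
    ((be S hS) ∩ (be T hT)).card ≤ k * k := by
  have h : ((be S hS) ∩ (be T hT)).card ≤ (S ×ˢ T).card := by
    apply Finset.card_le_card_of_injOn (ep S) ?_ (ep_injOn S)
    intro e he
    rw [Finset.mem_coe, Finset.mem_inter] at he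
    obtain ⟨heS, heT⟩ := he
    simp only [be, mem_filter] at heS heT
    obtain ⟨_, ⟨v, hvS, hve⟩, _⟩ := heS
    obtain ⟨_, ⟨u, huT, hue⟩, _⟩ := heT
    rw [mem_iff_inf_sup] at hve hue
    rw [Finset.mem_coe, Finset.mem_product, ep]
    by_cases hinf : e.1.inf ∈ S
    · rw [if_pos hinf]
      refine ⟨hinf, ?_⟩
      rcases hue with rfl | rfl
      · exact absurd hinf (Finset.disjoint_right.mp hST huT)
      · exact huT
    · rw [if_neg hinf]
      have hsup : e.1.sup ∈ S := by
        rcases hve with rfl | rfl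
        · exact absurd hvS hinf
        · exact hvS
      refine ⟨hsup, ?_⟩
      rcases hue with rfl | rfl
      · exact huT
      · exact absurd hsup (Finset.disjoint_right.mp hST huT)
  calc ((be S hS) ∩ (be T hT)).card ≤ (S ×ˢ T).card := h
    _ = k * k := by rw [Finset.card_product, hS, hT]

lemma pe_disjoint_be' {S T : Finset (Fin n)} (hST : Disjoint S T)
    (hS : S.card = k) (hT : T.card = k) :
    Disjoint (pe S hS) (be T hT) := by
  rw [Finset.disjoint_left]
  intro e he hbe
  simp only [be, mem_filter] at hbe
  obtain ⟨_, ⟨v, hvT, hve⟩, _⟩ := hbe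
  exact Finset.disjoint_left.mp hST (mem_of_mem_pe he hve) hvT

lemma pe_disjoint_pe {S T : Finset (Fin n)} (hST : Disjoint S T)
    (hS : S.card = k) (hT : T.card = k) :
    Disjoint (pe S hS) (pe T hT) := by
  rw [Finset.disjoint_left]
  intro e heS heT
  have h1 : e.1.inf ∈ S := mem_of_mem_pe heS (mem_iff_inf_sup.mpr (Or.inl rfl))
  have h2 : e.1.inf ∈ T := mem_of_mem_pe heT (mem_iff_inf_sup.mpr (Or.inl rfl))
  exact Finset.disjoint_left.mp hST h1 h2

variable (p : ℝ)

lemma measure_Ev (hp0 : 0 ≤ p) (hp1 : p ≤ 1) (hk : 1 ≤ k)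
    (S : Finset (Fin n)) (hS : S.card = k) :
    erMeasure n p (Ev S hS)
      = ENNReal.ofReal p ^ (k - 1) * ENNReal.ofReal (1 - p) ^ (be S hS).card := by
  rw [Ev, erMeasure_cylinder p hp0 hp1 _ _ (pe_disjoint_be hS), card_pe hk]

lemma measure_Ev_inter (hp0 : 0 ≤ p) (hp1 : p ≤ 1) (hk : 1 ≤ k)
    {S T : Finset (Fin n)} (hST : Disjoint S T) (hS : S.card = k) (hT : T.card = k) :
    erMeasure n p (Ev S hS ∩ Ev T hT) * ENNReal.ofReal (1 - p) ^ (k * k)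
      ≤ erMeasure n p (Ev S hS) * erMeasure n p (Ev T hT) := by
  have hset : Ev S hS ∩ Ev T hT = {ω : Om n |
      (∀ e ∈ pe S hS ∪ pe T hT, ω e = true) ∧ (∀ e ∈ be S hS ∪ be T hT, ω e = false)} := by
    ext ω
    simp only [Ev, Set.mem_inter_iff, Set.mem_setOf_eq, Finset.mem_union, or_imp, forall_and]
    tauto
  have hdisj : Disjoint (pe S hS ∪ pe T hT) (be S hS ∪ be T hT) := by
    rw [Finset.disjoint_union_left]
    constructor
    · rw [Finset.disjoint_union_right]
      exact ⟨pe_disjoint_be hS, pe_disjoint_be' hST hS hT⟩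
    · rw [Finset.disjoint_union_right]
      exact ⟨pe_disjoint_be' hST.symm hT hS, pe_disjoint_be hT⟩
  rw [hset, erMeasure_cylinder p hp0 hp1 _ _ hdisj,
    measure_Ev p hp0 hp1 hk S hS, measure_Ev p hp0 hp1 hk T hT,
    Finset.card_union_of_disjoint (pe_disjoint_pe hST hS hT), card_pe hk, card_pe hk]
  have hcard : (be S hS).card + (be T hT).card
      = (be S hS ∪ be T hT).card + (be S hS ∩ be T hT).card :=
    (Finset.card_union_add_card_inter _ _).symm
  have hb1 : (ENNReal.ofReal (1 - p)) ≤ 1 := by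
    rw [← ENNReal.ofReal_one]
    exact ENNReal.ofReal_le_ofReal (by linarith)
  calc ENNReal.ofReal p ^ (k - 1 + (k - 1)) * ENNReal.ofReal (1 - p) ^ (be S hS ∪ be T hT).card
        * ENNReal.ofReal (1 - p) ^ (k * k)
      = ENNReal.ofReal p ^ (k - 1 + (k - 1)) *
        ENNReal.ofReal (1 - p) ^ ((be S hS ∪ be T hT).card + k * k) := by
        rw [pow_add]; ring
    _ ≤ ENNReal.ofReal p ^ (k - 1 + (k - 1)) *
        ENNReal.ofReal (1 - p) ^ ((be S hS).card + (be T hT).card) := by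
        apply mul_le_mul_right
        apply pow_le_pow_of_le_one (by positivity) hb1
        have := card_be_inter_le hST hS hT
        omega
    _ = ENNReal.ofReal p ^ (k - 1) * ENNReal.ofReal (1 - p) ^ (be S hS).card *
        (ENNReal.ofReal p ^ (k - 1) * ENNReal.ofReal (1 - p) ^ (be T hT).card) := by
        rw [pow_add, pow_add]; ring

end ER3

namespace ER4
open ER ER2 ER3 Finset MeasureTheory
open scoped Classical

lemma chung_erdos {Ω : Type*} [MeasurableSpace Ω] (μ : Measure Ω) {ι : Type*}
    (I : Finset ι) (A : ι → Set Ω) (hA : ∀ i, MeasurableSet (A i))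
    {B : Set Ω} (hB : MeasurableSet B) (hsub : ∀ i ∈ I, A i ⊆ B) :
    (∑ i ∈ I, μ (A i)) ^ 2 ≤ (∑ i ∈ I, ∑ j ∈ I, μ (A i ∩ A j)) * μ B := by
  set f : Ω → ℝ≥0∞ := fun ω => ∑ i ∈ I, (A i).indicator 1 ω with hf
  set g : Ω → ℝ≥0∞ := B.indicator 1 with hg
  have hfm : Measurable f := Finset.measurable_sum _ (fun i _ => measurable_one.indicator (hA i))
  have hgm : Measurable g := measurable_one.indicator hB
  have hint1 : ∫⁻ ω, f ω ∂μ = ∑ i ∈ I, μ (A i) := by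
    rw [hf, lintegral_finset_sum _ (fun i _ => measurable_one.indicator (hA i))]
    exact Finset.sum_congr rfl fun i _ => lintegral_indicator_one (hA i)
  have hfg : f = fun ω => f ω * g ω := by
    funext ω
    by_cases hω : ω ∈ B
    · rw [hg, Set.indicator_of_mem hω, Pi.one_apply, mul_one]
    · have h0 : f ω = 0 := Finset.sum_eq_zero fun i hi =>
        Set.indicator_of_notMem (fun hA' => hω (hsub i hi hA')) _
      rw [h0, zero_mul]
  have hf2 : ∫⁻ ω, f ω ^ (2:ℝ) ∂μ = ∑ i ∈ I, ∑ j ∈ I, μ (A i ∩ A j) := by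
    have : ∀ ω, f ω ^ (2:ℝ) = ∑ i ∈ I, ∑ j ∈ I, (A i ∩ A j).indicator 1 ω := by
      intro ω
      rw [show ((2:ℝ)) = ((2:ℕ):ℝ) by norm_num, ENNReal.rpow_natCast, sq, hf,
        Finset.sum_mul_sum]
      refine Finset.sum_congr rfl fun i _ => Finset.sum_congr rfl fun j _ => ?_
      rw [Set.inter_indicator_one]
      rfl
    simp_rw [this]
    rw [lintegral_finset_sum _ (fun i _ => Finset.measurable_sum _
      (fun j _ => measurable_one.indicator ((hA i).inter (hA j))))]
    refine Finset.sum_congr rfl fun i _ => ?_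
    rw [lintegral_finset_sum _ (fun j _ => measurable_one.indicator ((hA i).inter (hA j)))]
    exact Finset.sum_congr rfl fun j _ => lintegral_indicator_one ((hA i).inter (hA j))
  have hg2 : ∫⁻ ω, g ω ^ (2:ℝ) ∂μ = μ B := by
    have : ∀ ω, g ω ^ (2:ℝ) = B.indicator 1 ω := by
      intro ω
      rw [hg]
      by_cases hω : ω ∈ B
      · rw [Set.indicator_of_mem hω]
        simp
      · rw [Set.indicator_of_notMem hω]
        rw [ENNReal.zero_rpow_of_pos (by norm_num)]
    simp_rw [this]
    exact lintegral_indicator_one hB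
  have hconj : Real.HolderConjugate 2 2 := Real.HolderConjugate.two_two
  have H : ∫⁻ ω, f ω * g ω ∂μ ≤ (∫⁻ ω, f ω ^ (2:ℝ) ∂μ) ^ (1/(2:ℝ)) *
      (∫⁻ ω, g ω ^ (2:ℝ) ∂μ) ^ (1/(2:ℝ)) :=
    ENNReal.lintegral_mul_le_Lp_mul_Lq μ hconj hfm.aemeasurable hgm.aemeasurable
  have Hs : (∑ i ∈ I, μ (A i)) ≤ (∑ i ∈ I, ∑ j ∈ I, μ (A i ∩ A j)) ^ (1/(2:ℝ)) *
      (μ B) ^ (1/(2:ℝ)) := by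
    rw [← hint1, ← hf2, ← hg2]
    calc ∫⁻ ω, f ω ∂μ = ∫⁻ ω, f ω * g ω ∂μ := by conv_lhs => rw [hfg]
      _ ≤ _ := H
  calc (∑ i ∈ I, μ (A i)) ^ 2
      ≤ ((∑ i ∈ I, ∑ j ∈ I, μ (A i ∩ A j)) ^ (1/(2:ℝ)) * (μ B) ^ (1/(2:ℝ))) ^ 2 :=
        pow_le_pow_left' Hs 2
    _ = (∑ i ∈ I, ∑ j ∈ I, μ (A i ∩ A j)) * μ B := by
        rw [mul_pow, ← ENNReal.rpow_natCast (_ ^ (1/(2:ℝ))) 2,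
          ← ENNReal.rpow_natCast ((μ B) ^ (1/(2:ℝ))) 2, ← ENNReal.rpow_mul, ← ENNReal.rpow_mul]
        norm_num

end ER4

namespace ER5
open ER ER2 ER3 ER4 Finset MeasureTheory
open scoped Classical

variable (n k : ℕ) (p : ℝ)

noncomputable def sval : ℝ≥0∞ :=
  ∑ S ∈ (powersetCard k (univ : Finset (Fin n))).attach,
    erMeasure n p (Ev S.1 (Finset.mem_powersetCard_univ.mp S.2))

noncomputable def tval : ℝ≥0∞ :=
  ∑ S ∈ (powersetCard k (univ : Finset (Fin n))).attach,
    ∑ T ∈ (powersetCard k (univ : Finset (Fin n))).attach,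
      erMeasure n p (Ev S.1 (Finset.mem_powersetCard_univ.mp S.2) ∩
        Ev T.1 (Finset.mem_powersetCard_univ.mp T.2))

variable {n k p}

lemma erMeasure_prob (n : ℕ) (p : ℝ) : IsProbabilityMeasure (erMeasure n p) := by
  rw [erMeasure]; infer_instance

lemma sval_ne_top : sval n k p ≠ ⊤ := by
  haveI := erMeasure_prob n p
  refine (ENNReal.sum_lt_top.mpr fun S _ => ?_).ne
  exact (prob_le_one.trans_lt ENNReal.one_lt_top)

lemma sval_lower (hp0 : 0 ≤ p) (hp1 : p ≤ 1) (hk : 1 ≤ k) :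
    (n.choose k : ℝ≥0∞) * (ENNReal.ofReal p ^ (k-1) * ENNReal.ofReal (1 - p) ^ (k * n))
      ≤ sval n k p := by
  have hb1 : (ENNReal.ofReal (1 - p)) ≤ 1 := by
    rw [← ENNReal.ofReal_one]
    exact ENNReal.ofReal_le_ofReal (by linarith)
  have hcard : (powersetCard k (univ : Finset (Fin n))).attach.card = n.choose k := by
    rw [Finset.card_attach, Finset.card_powersetCard, Finset.card_univ, Fintype.card_fin]
  calc (n.choose k : ℝ≥0∞) * (ENNReal.ofReal p ^ (k-1) * ENNReal.ofReal (1 - p) ^ (k * n))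
      = (powersetCard k (univ : Finset (Fin n))).attach.card •
        (ENNReal.ofReal p ^ (k-1) * ENNReal.ofReal (1 - p) ^ (k * n)) := by
        rw [hcard, nsmul_eq_mul]
    _ ≤ sval n k p := by
        apply Finset.card_nsmul_le_sum
        intro S _
        rw [measure_Ev p hp0 hp1 hk S.1 (Finset.mem_powersetCard_univ.mp S.2)]
        exact mul_le_mul_right (pow_le_pow_of_le_one (by positivity) hb1
          (card_be_le _ _)) _

lemma tval_le (hp0 : 0 ≤ p) (hp1 : p < 1) (hk : 1 ≤ k) :
    tval n k p ≤ sval n k p + sval n k p ^ 2 /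
      ENNReal.ofReal (1 - p) ^ (k * k) := by
  set r : ℝ≥0∞ := ENNReal.ofReal (1 - p) ^ (k * k) with hr
  have hr0 : r ≠ 0 := pow_ne_zero _ (ENNReal.ofReal_pos.mpr (by linarith)).ne'
  have hrt : r ≠ ⊤ := (pow_ne_top ENNReal.ofReal_ne_top)
  set I := (powersetCard k (univ : Finset (Fin n))).attach with hI
  set μ := erMeasure n p with hμ
  set Evf : {S // S ∈ powersetCard k (univ : Finset (Fin n))} → Set (Om n) :=
    fun S => Ev S.1 (Finset.mem_powersetCard_univ.mp S.2) with hEvf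
  have step : ∀ i ∈ I, ∑ j ∈ I, μ (Evf i ∩ Evf j)
      ≤ μ (Evf i) + ∑ j ∈ I, (μ (Evf i) * μ (Evf j)) / r := by
    intro i hi
    rw [← Finset.sum_erase_add I _ hi, Set.inter_self]
    rw [add_comm (μ (Evf i))]
    apply add_le_add_left
    have hterm : ∀ j ∈ I.erase i, μ (Evf i ∩ Evf j) ≤ (μ (Evf i) * μ (Evf j)) / r := by
      intro j hj
      have hne : i.1 ≠ j.1 := fun h => (Finset.mem_erase.mp hj).1 (Subtype.ext h.symm)
      by_cases hd : Disjoint i.1 j.1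
      · rw [ENNReal.le_div_iff_mul_le (Or.inl hr0) (Or.inl hrt)]
        exact measure_Ev_inter p hp0 hp1.le hk hd _ _
      · rw [hEvf, Ev_disjoint hk hne hd]
        simp
    calc ∑ j ∈ I.erase i, μ (Evf i ∩ Evf j)
        ≤ ∑ j ∈ I.erase i, (μ (Evf i) * μ (Evf j)) / r := Finset.sum_le_sum hterm
      _ ≤ ∑ j ∈ I, (μ (Evf i) * μ (Evf j)) / r :=
          Finset.sum_le_sum_of_subset (Finset.erase_subset _ _)
  calc tval n k p ≤ ∑ i ∈ I, (μ (Evf i) + ∑ j ∈ I, (μ (Evf i) * μ (Evf j)) / r) :=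
        Finset.sum_le_sum step
    _ = sval n k p + sval n k p ^ 2 / r := by
        rw [Finset.sum_add_distrib]
        congr 1
        simp_rw [div_eq_mul_inv, ← Finset.sum_mul, ← Finset.mul_sum]
        rw [← Finset.sum_mul, sq]
        rfl

lemma key_ineq (hk : 1 ≤ k) :
    sval n k p ^ 2 ≤ tval n k p * erMeasure n p {ω : Om n | 0 < numCompsEq (erGraph n ω) k} := by
  apply chung_erdos
  · intro i
    exact measurableSet_all _
  · exact measurableSet_all _
  · intro i _
    intro ω hω
    exact numCompsEq_pos hk hω

end ER5

namespace ER6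
open ER ER2 ER3 ER4 ER5 Finset MeasureTheory Filter
open scoped Classical

lemma log_one_sub_ge {p : ℝ} (hp : 0 ≤ p) (hp2 : p ≤ 1/2) :
    -p - 2*p^2 ≤ Real.log (1 - p) := by
  have h1p : 0 < 1 - p := by linarith
  have h := Real.log_le_sub_one_of_pos (inv_pos.mpr h1p)
  rw [Real.log_inv] at h
  have h2 : Real.log (1 - p) ≥ 1 - (1-p)⁻¹ := by linarith
  have h3 : (1-p)⁻¹ ≤ 1 + p + 2*p^2 := by
    rw [inv_le_iff_one_le_mul₀ h1p]
    nlinarith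
  linarith

lemma natlog_tendsto : Tendsto (fun n : ℕ => Real.log n) atTop atTop :=
  Real.tendsto_log_atTop.comp tendsto_natCast_atTop_atTop

set_option maxHeartbeats 2000000 in
lemma sval_big {k : ℕ} (hk : 1 ≤ k) (w p : ℕ → ℝ) (hp0 : ∀ n, 0 ≤ p n)
    (hw : Tendsto w atTop atTop)
    (hwo : w =o[atTop] fun n : ℕ => Real.log (Real.log n))
    (hΛ : ∀ᶠ n : ℕ in atTop, (n : ℝ) * p n =
      (1 / (k : ℝ)) * (Real.log n + ((k : ℝ) - 1) * Real.log (Real.log n)) - w n) :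
    ∀ᶠ n : ℕ in atTop, p n ≤ 1/2 ∧ p n ≤ 2 * Real.log n / ((k:ℝ) * n) ∧
      ENNReal.ofReal (Real.exp ((k:ℝ) * w n - (Real.log (k.factorial) + (k:ℝ)*Real.log 2
        + ((k:ℝ)-1)*Real.log (2*(k:ℝ)) + 1))) ≤ sval n k (p n) := by
  set K : ℝ := (k : ℝ) with hKdef
  have hKpos : (0:ℝ) < K := Nat.cast_pos.mpr (by omega)
  have hK1 : (1:ℝ) ≤ K := Nat.one_le_cast.mpr hk
  have h1 : (fun n : ℕ => Real.log (Real.log n)) =o[atTop] (fun n : ℕ => Real.log n) :=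
    Real.isLittleO_log_id_atTop.comp_tendsto natlog_tendsto
  have h4 : (fun n : ℕ => Real.log n) =o[atTop] (fun n : ℕ => ((n:ℝ) ^ (1/2:ℝ))) :=
    (isLittleO_log_rpow_atTop (by norm_num)).comp_tendsto tendsto_natCast_atTop_atTop
  have h5 : (fun n : ℕ => Real.log n * Real.log n) =o[atTop] (fun n : ℕ => (n:ℝ)) := by
    have h := h4.mul h4
    have he : (fun n : ℕ => ((n:ℝ) ^ (1/2:ℝ)) * ((n:ℝ)^(1/2:ℝ))) = fun n : ℕ => (n:ℝ) := by
      funext n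
      rw [← Real.rpow_add' (Nat.cast_nonneg n) (by norm_num)]
      norm_num
    rwa [he] at h
  filter_upwards [hΛ, hw.eventually_ge_atTop 0,
    hwo.def (show (0:ℝ) < 1/(2*K) by positivity),
    h1.def one_pos, h1.def (show (0:ℝ) < 1/K by positivity),
    h5.def (show (0:ℝ) < 1/16 by norm_num),
    natlog_tendsto.eventually_ge_atTop 1,
    eventually_ge_atTop (2*k), eventually_ge_atTop 1] with n hΛn hw0 hwB hE' hE hF hlog1 h2k hn1
  -- basic positivity facts
  have hnpos : (0:ℝ) < n := by exact_mod_cast hn1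
  have hlogpos : (0:ℝ) < Real.log n := lt_of_lt_of_le one_pos hlog1
  have hllnn : (0:ℝ) ≤ Real.log (Real.log n) := Real.log_nonneg hlog1
  rw [Real.norm_eq_abs, Real.norm_eq_abs, abs_of_nonneg hllnn, abs_of_nonneg hw0] at hwB
  rw [Real.norm_eq_abs, Real.norm_eq_abs, abs_of_nonneg hllnn,
    abs_of_nonneg hlogpos.le] at hE' hE
  rw [Real.norm_eq_abs, Real.norm_eq_abs, abs_of_nonneg (mul_self_nonneg _),
    abs_of_nonneg (Nat.cast_nonneg n)] at hF
  have hE2 : (K - 1) * Real.log (Real.log n) ≤ Real.log n := by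
    have := mul_le_mul_of_nonneg_left hE (by linarith : (0:ℝ) ≤ K - 1)
    calc (K-1) * Real.log (Real.log n) ≤ (K-1) * (1/K * Real.log n) := by
          exact mul_le_mul_of_nonneg_left hE (by linarith)
      _ ≤ Real.log n := by
          rw [← mul_assoc]
          have : (K-1) * (1/K) ≤ 1 := by
            rw [mul_one_div, div_le_one hKpos]; linarith
          nlinarith
  have hKw : K * w n ≤ (1/2) * Real.log (Real.log n) := by
    have := mul_le_mul_of_nonneg_left hwB hKpos.le
    calc K * w n ≤ K * (1/(2*K) * Real.log (Real.log n)) := this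
      _ = (1/2) * Real.log (Real.log n) := by field_simp
  -- the key product identity
  have hknp : K * ((n:ℝ) * p n) = Real.log n + (K - 1) * Real.log (Real.log n) - K * w n := by
    rw [hΛn]
    field_simp
  have hknp_up : K * ((n:ℝ) * p n) ≤ 2 * Real.log n := by
    rw [hknp]
    have : K * w n ≥ 0 := by positivity
    linarith
  have hknp_low : Real.log n / 2 ≤ K * ((n:ℝ) * p n) := by
    rw [hknp]
    have h0 : 0 ≤ (K - 1) * Real.log (Real.log n) := by
      apply mul_nonneg (by linarith) hllnn
    linarith [hE'.trans_eq rfl, hKw, hE']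
  have hp_low : Real.log n / (2*K*(n:ℝ)) ≤ p n := by
    rw [div_le_iff₀ (by positivity)]
    have := hknp_low
    nlinarith
  have hp_up : p n ≤ 2 * Real.log n / (K * (n:ℝ)) := by
    rw [le_div_iff₀ (by positivity)]
    nlinarith
  have hlogsq : Real.log n * Real.log n ≤ (n:ℝ)/16 := by linarith
  have hphalf : p n ≤ 1/2 := by
    have h8 : 2 * Real.log n / (K * n) ≤ 2 * Real.log n / n := by
      apply div_le_div_of_nonneg_left (by positivity) hnpos
      nlinarith
    have h9 : Real.log n ≤ (n:ℝ)/16 := by nlinarith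
    have : 2 * Real.log n / (n:ℝ) ≤ 1/8 := by
      rw [div_le_iff₀ hnpos]; nlinarith
    linarith
  refine ⟨hphalf, hp_up, ?_⟩
  have hppos : 0 < p n := lt_of_lt_of_le (by positivity) hp_low
  have h1ppos : (0:ℝ) < 1 - p n := by linarith
  -- small square term
  have hp_up' : p n * (K * (n:ℝ)) ≤ 2 * Real.log n := (le_div_iff₀ (by positivity)).mp hp_up
  have hsq : 2 * (K * ((n:ℝ) * p n)) * p n ≤ 1 := by
    have hprod : (K * ((n:ℝ) * p n)) * (p n * (K * (n:ℝ))) ≤ (2*Real.log n) * (2*Real.log n) :=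
      mul_le_mul hknp_up hp_up' (by positivity) (by positivity)
    rw [← mul_le_mul_iff_left₀ (show (0:ℝ) < K*(n:ℝ) by positivity)]
    calc 2 * (K * ((n:ℝ) * p n)) * p n * (K*(n:ℝ))
        = 2 * ((K * ((n:ℝ) * p n)) * (p n * (K*(n:ℝ)))) := by ring
      _ ≤ 2 * ((2*Real.log n) * (2*Real.log n)) := by linarith
      _ = 8 * (Real.log n * Real.log n) := by ring
      _ ≤ 8 * ((n:ℝ)/16) := by linarith
      _ ≤ 1 * (K*(n:ℝ)) := by nlinarith
  have hlog1p : -(p n) - 2*(p n)^2 ≤ Real.log (1 - p n) := log_one_sub_ge (hp0 n) hphalf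
  have hkn_log : -(K * ((n:ℝ)*p n)) - 1 ≤ (K*(n:ℝ)) * Real.log (1 - p n) := by
    have hmul := mul_le_mul_of_nonneg_left hlog1p (show (0:ℝ) ≤ K*(n:ℝ) by positivity)
    have hid : (K*(n:ℝ)) * (-(p n) - 2*(p n)^2)
        = -(K*((n:ℝ)*p n)) - (2*(K*((n:ℝ)*p n))*p n) := by ring
    rw [hid] at hmul
    linarith
  have hknR : (k:ℕ) ≤ n := by omega
  have hchoosebound : ((n:ℝ)/2)^k / (k.factorial:ℝ) ≤ (n.choose k : ℝ) := by
    have h1 : (n+1-k)^k ≤ n.descFactorial k := Nat.pow_sub_le_descFactorial n k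
    have h2 : n.descFactorial k = k.factorial * n.choose k :=
      Nat.descFactorial_eq_factorial_mul_choose n k
    have hcast : ((n:ℝ)/2)^k ≤ ((n+1-k : ℕ):ℝ)^k := by
      apply pow_le_pow_left₀ (by positivity)
      have hc1 : ((n+1-k:ℕ):ℝ) = (n:ℝ)+1-(k:ℝ) := by
        have hle : k ≤ n+1 := by omega
        push_cast [Nat.cast_sub hle]
        ring
      rw [hc1]
      have hc2 : 2*(k:ℝ) ≤ (n:ℝ) := by exact_mod_cast h2k
      linarith
    have h3 : ((n+1-k : ℕ):ℝ)^k ≤ (k.factorial : ℝ) * (n.choose k : ℝ) := by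
      have := h1.trans_eq h2
      exact_mod_cast Nat.cast_le.mpr this
    rw [div_le_iff₀ (by positivity)]
    calc ((n:ℝ)/2)^k ≤ ((n+1-k : ℕ):ℝ)^k := hcast
      _ ≤ (k.factorial : ℝ) * (n.choose k : ℝ) := h3
      _ = (n.choose k : ℝ) * (k.factorial:ℝ) := by ring
  have hchoosepos : (0:ℝ) < (n.choose k : ℝ) := by
    exact_mod_cast Nat.choose_pos hknR
  have hlogchoose : K*(Real.log n - Real.log 2) - Real.log (k.factorial)
      ≤ Real.log (n.choose k) := by
    have h := Real.log_le_log (by positivity) hchoosebound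
    rw [Real.log_div (by positivity) (by positivity), Real.log_pow,
      Real.log_div hnpos.ne' (by norm_num)] at h
    linarith
  have hlogp : Real.log (Real.log n) - Real.log (2*K) - Real.log n ≤ Real.log (p n) := by
    have h := Real.log_le_log (show (0:ℝ) < Real.log n/(2*K*(n:ℝ)) by positivity) hp_low
    rw [Real.log_div hlogpos.ne' (by positivity), Real.log_mul (by positivity) hnpos.ne'] at h
    linarith
  have hX : (0:ℝ) < (n.choose k : ℝ) * (p n)^(k-1) * ((1-p n)^(k*n)) := by positivity
  have hexp_le : Real.exp (K * w n - (Real.log (k.factorial) + K*Real.log 2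
        + (K-1)*Real.log (2*K) + 1))
      ≤ (n.choose k:ℝ) * p n ^(k-1) * (1-p n)^(k*n) := by
    rw [← Real.le_log_iff_exp_le hX]
    have hcast1 : ((k-1:ℕ):ℝ) = K - 1 := by
      rw [Nat.cast_sub hk]; norm_num; exact hKdef.symm
    have hcast2 : ((k*n:ℕ):ℝ) = K * (n:ℝ) := by push_cast; ring
    have hlogX : Real.log ((n.choose k:ℝ) * p n ^(k-1) * (1-p n)^(k*n))
        = Real.log (n.choose k) + ((k-1:ℕ):ℝ)*Real.log (p n)
          + ((k*n:ℕ):ℝ)*Real.log (1-p n) := by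
      rw [Real.log_mul (mul_ne_zero hchoosepos.ne' (pow_ne_zero _ hppos.ne'))
          (pow_ne_zero _ h1ppos.ne'),
        Real.log_mul hchoosepos.ne' (pow_ne_zero _ hppos.ne'), Real.log_pow, Real.log_pow]
    rw [hlogX, hcast1, hcast2]
    have h14 := mul_le_mul_of_nonneg_left hlogp (show (0:ℝ) ≤ K-1 by linarith)
    have hsub : -(Real.log n + (K-1)*Real.log (Real.log n) - K * w n) - 1
        ≤ (K*(n:ℝ))*Real.log (1-p n) := by
      rw [← hknp]; exact hkn_log
    nlinarith [hlogchoose, h14, hsub]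
  calc ENNReal.ofReal (Real.exp (K * w n - (Real.log (k.factorial) + K*Real.log 2
        + (K-1)*Real.log (2*K) + 1)))
      ≤ ENNReal.ofReal ((n.choose k:ℝ) * p n ^(k-1) * (1-p n)^(k*n)) :=
        ENNReal.ofReal_le_ofReal hexp_le
    _ = (n.choose k : ℝ≥0∞) * (ENNReal.ofReal (p n))^(k-1) * (ENNReal.ofReal (1-p n))^(k*n) := by
        rw [ENNReal.ofReal_mul (by positivity), ENNReal.ofReal_mul (by positivity),
          ENNReal.ofReal_pow (hp0 n), ENNReal.ofReal_pow (by linarith), ENNReal.ofReal_natCast]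
    _ ≤ sval n k (p n) := by
        rw [mul_assoc]
        exact sval_lower (hp0 n) (by linarith) hk

end ER6

/-- For `k ≥ 1` and `w(n) → ∞`, `w(n) = o(log log n)`: if
`n·p(n) = (1/k)(log n + (k−1) log log n) − w(n)` then `P(N_k > 0) → 1`, where `N_k`
is the number of connected components of `G(n,p)` with exactly `k` vertices. -/
theorem prob_comps_size_k_tendsto_one (k : ℕ) (hk : 1 ≤ k) (p w : ℕ → ℝ)
    (hp0 : ∀ n, 0 ≤ p n) (hp1 : ∀ n, p n ≤ 1)
    (hw : Tendsto w atTop atTop)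
    (hwo : w =o[atTop] fun n : ℕ => Real.log (Real.log n))
    (hΛ : ∀ᶠ n : ℕ in atTop, (n : ℝ) * p n =
      (1 / (k : ℝ)) * (Real.log n + ((k : ℝ) - 1) * Real.log (Real.log n)) - w n) :
    Tendsto (fun n => erMeasure n (p n) {ω | 0 < numCompsEq (erGraph n ω) k})
      atTop (nhds 1) := by

  classical
  set C : ℝ := Real.log (k.factorial) + (k:ℝ)*Real.log 2 + ((k:ℝ)-1)*Real.log (2*(k:ℝ)) + 1 with hC
  have hbig := ER6.sval_big hk w p hp0 hw hwo hΛ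
  set s : ℕ → ℝ≥0∞ := fun n => ER5.sval n k (p n) with hs
  set r : ℕ → ℝ≥0∞ := fun n => (ENNReal.ofReal (1 - p n))^(k*k) with hrdef
  set g : ℕ → ℝ≥0∞ := fun n => ((s n)⁻¹ + (r n)⁻¹)⁻¹ with hg
  have hkpos : (0:ℝ) < (k:ℝ) := Nat.cast_pos.mpr (by omega)
  -- Step 1 : eventual lower bound for the measure
  have hstep1 : ∀ᶠ n : ℕ in atTop,
      g n ≤ erMeasure n (p n) {ω | 0 < numCompsEq (erGraph n ω) k} := by
    filter_upwards [hbig] with n hn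
    obtain ⟨hhalf, hup, hlow⟩ := hn
    have hs0 : s n ≠ 0 :=
      (lt_of_lt_of_le (ENNReal.ofReal_pos.mpr (Real.exp_pos _)) hlow).ne'
    have hst : s n ≠ ⊤ := ER5.sval_ne_top
    have hplt : p n < 1 := lt_of_le_of_lt hhalf (by norm_num)
    have hr0 : r n ≠ 0 := pow_ne_zero _ (ENNReal.ofReal_pos.mpr (by linarith)).ne'
    have hrt : r n ≠ ⊤ := ENNReal.pow_ne_top ENNReal.ofReal_ne_top
    have key := ER5.key_ineq (n := n) (p := p n) hk
    have ht := ER5.tval_le (n := n) (p := p n) (hp0 n) hplt hk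
    set μB := erMeasure n (p n) {ω | 0 < numCompsEq (erGraph n ω) k} with hμB
    have h1 : s n^2 * (s n)⁻¹ = s n := by
      rw [sq, mul_assoc, ENNReal.mul_inv_cancel hs0 hst, mul_one]
    have hdecomp : s n^2 * ((s n)⁻¹ + (r n)⁻¹) = s n + s n^2 / r n := by
      rw [mul_add, h1, div_eq_mul_inv]
    have hchain : s n^2 * 1 ≤ s n^2 * (((s n)⁻¹ + (r n)⁻¹) * μB) := by
      rw [mul_one, ← mul_assoc, hdecomp]
      exact key.trans (mul_le_mul_left ht _)
    have hone : 1 ≤ ((s n)⁻¹ + (r n)⁻¹) * μB :=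
      (ENNReal.mul_le_mul_iff_right (pow_ne_zero _ hs0) (ENNReal.pow_ne_top hst)).mp hchain
    have hx0 : (s n)⁻¹ + (r n)⁻¹ ≠ 0 :=
      (lt_of_lt_of_le (ENNReal.inv_pos.mpr hst) le_self_add).ne'
    have hxt : (s n)⁻¹ + (r n)⁻¹ ≠ ⊤ :=
      ENNReal.add_ne_top.mpr ⟨ENNReal.inv_ne_top.mpr hs0, ENNReal.inv_ne_top.mpr hr0⟩
    calc g n = ((s n)⁻¹ + (r n)⁻¹)⁻¹ * 1 := (mul_one _).symm
      _ ≤ ((s n)⁻¹ + (r n)⁻¹)⁻¹ * (((s n)⁻¹ + (r n)⁻¹) * μB) := mul_le_mul_right hone _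
      _ = μB := by rw [← mul_assoc, ENNReal.inv_mul_cancel hx0 hxt, one_mul]
  -- Step 2 : g → 1
  have hsg : Tendsto g atTop (nhds 1) := by
    have harg : Tendsto (fun n : ℕ => (k:ℝ) * w n - C) atTop atTop := by
      have h1 : Tendsto (fun n : ℕ => (k:ℝ) * w n) atTop atTop := hw.const_mul_atTop hkpos
      have h2 := tendsto_atTop_add_const_right atTop (-C) h1
      simpa [sub_eq_add_neg] using h2
    have hlow_top : Tendsto (fun n : ℕ => ENNReal.ofReal (Real.exp ((k:ℝ) * w n - C)))
        atTop (nhds ⊤) :=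
      ENNReal.tendsto_ofReal_atTop.comp (Real.tendsto_exp_atTop.comp harg)
    have hs_top : Tendsto s atTop (nhds ⊤) := by
      apply tendsto_nhds_top_mono hlow_top
      filter_upwards [hbig] with n hn
      exact hn.2.2
    have hsinv : Tendsto (fun n => (s n)⁻¹) atTop (nhds 0) := by
      have := ENNReal.tendsto_inv_iff.mpr hs_top
      rwa [ENNReal.inv_top] at this
    have hptend : Tendsto (fun n : ℕ => p n) atTop (nhds 0) := by
      have hlogdiv : Tendsto (fun n : ℕ => Real.log n / (n:ℝ)) atTop (nhds 0) :=
        (Real.isLittleO_log_id_atTop.comp_tendsto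
          tendsto_natCast_atTop_atTop).tendsto_div_nhds_zero
      have hbtend : Tendsto (fun n : ℕ => 2 * Real.log n / ((k:ℝ) * n)) atTop (nhds 0) := by
        have heq : (fun n : ℕ => 2 * Real.log n / ((k:ℝ) * n))
            = fun n : ℕ => (2/(k:ℝ)) * (Real.log n / (n:ℝ)) := by
          funext n; ring
        rw [heq]
        simpa using hlogdiv.const_mul (2/(k:ℝ))
      apply squeeze_zero' (Eventually.of_forall fun n => hp0 n) _ hbtend
      filter_upwards [hbig] with n hn
      exact hn.2.1
    have hrtend : Tendsto r atTop (nhds 1) := by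
      have h1 : Tendsto (fun n : ℕ => (1 : ℝ) - p n) atTop (nhds 1) := by
        simpa using (tendsto_const_nhds (x := (1:ℝ))).sub hptend
      have h2 : Tendsto (fun n : ℕ => ENNReal.ofReal (1 - p n)) atTop (nhds 1) := by
        have := ENNReal.tendsto_ofReal h1
        rwa [ENNReal.ofReal_one] at this
      have h3 := ((ENNReal.continuous_pow (k*k)).tendsto 1).comp h2
      rw [one_pow] at h3
      exact h3
    have hrinv : Tendsto (fun n => (r n)⁻¹) atTop (nhds 1) := by
      have := ENNReal.tendsto_inv_iff.mpr hrtend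
      rwa [inv_one] at this
    have hsum : Tendsto (fun n => (s n)⁻¹ + (r n)⁻¹) atTop (nhds 1) := by
      have := hsinv.add hrinv
      rwa [zero_add] at this
    have := ENNReal.tendsto_inv_iff.mpr hsum
    rwa [inv_one] at this
  -- Step 3 : squeeze
  apply tendsto_of_tendsto_of_tendsto_of_le_of_le' hsg tendsto_const_nhds hstep1
  apply Eventually.of_forall
  intro n
  haveI := ER5.erMeasure_prob n (p n)
  exact prob_le_one
end
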